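/- arXiv:2208.00413 — 3 statements merged into one kernel-verified Lean document; each statement's English description precedes it below -/
import Mathlib

section
/- Let r̄ ≥ 3, let G ∈ 𝒫_{r₁,r₂} and F ∈ 𝒫_{r₃,r₄} with r₁, r₂, r₃, r₄ ≤ r̄ and 3 ≤ r₁ ≤ r₂, and let n̄ ∈ ℕ be the smallest integer such that (n̄+1)(r₁−2) + r₂ > r̄. Then there exists a constant C_{r̄} > 0 such that for every k ≤ n̄ and every R > 0 one has ‖(Ad_G)^k F‖_R ≤ (C_{r̄} · ‖G‖_R / R²)^k · ‖F‖_R, where Ad_G F := {F;G} and (Ad_G)^k denotes the k-fold iterate. -/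
open scoped BigOperators

namespace AG

abbrev Zd (d : ℕ) := Fin d → ℤ

noncomputable def enorm {d : ℕ} (j : Zd d) : ℝ := Real.sqrt (∑ i, ((j i : ℝ))^2)

abbrev Idx (d : ℕ) := Zd d × Bool

noncomputable def inorm {d : ℕ} (J : Idx d) : ℝ := enorm J.1

def sgn (b : Bool) : ℤ := if b then 1 else -1

noncomputable def sgnC (b : Bool) : ℂ := if b then 1 else -1

def conjIdx {d : ℕ} (J : Idx d) : Idx d := (J.1, !J.2)

abbrev Seq (d : ℕ) := Idx d → ℂ

noncomputable def sobNormSq (d : ℕ) (s : ℝ) (u : Seq d) : ℝ :=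
  ∑' J : Idx d, (1 + inorm J) ^ (2 * s) * ‖u J‖ ^ 2

noncomputable def sobNorm (d : ℕ) (s : ℝ) (u : Seq d) : ℝ := Real.sqrt (sobNormSq d s u)

def MemSob (d : ℕ) (s : ℝ) (u : Seq d) : Prop :=
  Summable (fun J : Idx d => (1 + inorm J) ^ (2 * s) * ‖u J‖ ^ 2)

noncomputable def momentum {d r : ℕ} (Jv : Fin r → Idx d) : Zd d :=
  ∑ l, sgn ((Jv l).2) • ((Jv l).1)

structure Poly (d r : ℕ) where
  coeff : (Fin r → Idx d) → ℂ
  symm : ∀ (π : Equiv.Perm (Fin r)) (Jv : Fin r → Idx d), coeff (Jv ∘ π) = coeff Jv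
  mom : ∀ Jv, coeff Jv ≠ 0 → momentum Jv = 0
  reality : ∀ Jv, (starRingEnd ℂ) (coeff (fun l => conjIdx (Jv l))) = coeff Jv
  bdd : ∃ M : ℝ, ∀ Jv, ‖coeff Jv‖ ≤ M

noncomputable def Poly.norm {d r : ℕ} (P : Poly d r) (R : ℝ) : ℝ :=
  (⨆ Jv : Fin r → Idx d, ‖P.coeff Jv‖) * R ^ r

noncomputable def Poly.eval {d r : ℕ} (P : Poly d r) (u : Seq d) : ℂ :=
  ∑' Jv : Fin r → Idx d, P.coeff Jv * ∏ l, u (Jv l)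

noncomputable def Poly.pderiv {d r : ℕ} (P : Poly d r) (K : Idx d) (u : Seq d) : ℂ :=
  ∑' Jv : Fin r → Idx d, ∑ l : Fin r,
    (if Jv l = K then P.coeff Jv * ∏ m ∈ Finset.univ.erase l, u (Jv m) else 0)

noncomputable def Poly.field {d r : ℕ} (P : Poly d r) (u : Seq d) : Seq d :=
  fun J => Complex.I * sgnC J.2 * P.pderiv (conjIdx J) u

noncomputable def freqSum {d r : ℕ} (ω : Zd d → ℝ) (Jv : Fin r → Idx d) : ℝ :=
  ∑ l, (sgn ((Jv l).2) : ℝ) * ω ((Jv l).1)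


/-- A polynomial with homogeneous components of each degree, finitely many nonzero
(used to encode the classes `𝒫_{r₁,r₂}`). -/
structure GPoly (d : ℕ) where
  part : ∀ r : ℕ, Poly d r
  finiteDegrees : {r : ℕ | ∃ Jv, (part r).coeff Jv ≠ 0}.Finite

/-- `G ∈ 𝒫_{a,b}`: all homogeneous components of degree `< a` or `> b` vanish. -/
def GPoly.InRange {d : ℕ} (G : GPoly d) (a b : ℕ) : Prop :=
  ∀ r : ℕ, (r < a ∨ b < r) → ∀ Jv, (G.part r).coeff Jv = 0

noncomputable def GPoly.norm {d : ℕ} (G : GPoly d) (R : ℝ) : ℝ :=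
  ∑' r : ℕ, (G.part r).norm R

noncomputable def GPoly.eval {d : ℕ} (G : GPoly d) (u : Seq d) : ℂ :=
  ∑' r : ℕ, (G.part r).eval u

noncomputable def GPoly.pderiv {d : ℕ} (G : GPoly d) (K : Idx d) (u : Seq d) : ℂ :=
  ∑' r : ℕ, (G.part r).pderiv K u

/-- Hamiltonian vector field of `G`: `(X_G)_{(j,σ)}(u) = iσ ∂G/∂u_{(j,−σ)}(u)`. -/
noncomputable def GPoly.field {d : ℕ} (G : GPoly d) (u : Seq d) : Seq d :=
  fun J => Complex.I * sgnC J.2 * G.pderiv (conjIdx J) u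

/-- `u : ℝ → ℓ²_s` solves `u' = X(u)` on `T`, the derivative being taken in `ℓ²_s`. -/
def SolvesFlow (d : ℕ) (s : ℝ) (X : Seq d → Seq d) (u : ℝ → Seq d) (T : Set ℝ) : Prop :=
  (∀ t ∈ T, MemSob d s (u t)) ∧
  ∀ t₀ ∈ T, Filter.Tendsto
    (fun t => sobNorm d s (fun J => u t J - u t₀ J - (t - t₀) * X (u t₀) J) / |t - t₀|)
    (nhdsWithin t₀ (T \ {t₀})) (nhds 0)

/-- `Q` represents the Poisson bracket `Ad_G F = {F;G}`: the associated functions agree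
(on finitely supported sequences, where all the sums are genuinely convergent). -/
def IsBracket {d : ℕ} (Q F G : GPoly d) : Prop :=
  ∀ u : Seq d, (Function.support u).Finite →
    Q.eval u = Complex.I * ∑' j : Zd d,
      (F.pderiv (j, false) u * G.pderiv (j, true) u
        - F.pderiv (j, true) u * G.pderiv (j, false) u)

section Aux

open MvPolynomial Finset

variable {d : ℕ}

noncomputable def uvec {n : ℕ} (Nv : Fin n → Idx d) (c : Fin n → ℂ) : Seq d :=
  fun J => ∑ i, if J = Nv i then c i else 0

lemma uvec_suppfin {n : ℕ} (Nv : Fin n → Idx d) (c : Fin n → ℂ) :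
    (Function.support (uvec Nv c)).Finite := by
  apply Set.Finite.subset (Set.finite_range Nv)
  intro J hJ
  simp only [Function.mem_support, uvec] at hJ
  by_contra hr
  apply hJ
  apply Finset.sum_eq_zero
  intro i _
  rw [if_neg]
  intro h; exact hr ⟨i, h.symm⟩

/-- the exponent multiset of a monomial pattern -/
noncomputable def dg {m n : ℕ} (g : Fin m → Fin n) : Fin n →₀ ℕ := ∑ l, Finsupp.single (g l) 1

lemma dg_apply {m n : ℕ} (g : Fin m → Fin n) (i : Fin n) :
    dg g i = (univ.filter (fun l => g l = i)).card := by
  rw [dg, Finsupp.finset_sum_apply, Finset.card_filter]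
  exact Finset.sum_congr rfl fun l _ => Finsupp.single_apply

lemma dg_smul_sum {m n : ℕ} {M : Type*} [AddCommMonoid M] (g : Fin m → Fin n) (h : Fin n → M) :
    ∑ i, dg g i • h i = ∑ l, h (g l) := by
  have : ∀ i, dg g i • h i = ∑ l, if g l = i then h i else 0 := by
    intro i
    rw [dg_apply, Finset.card_filter, Finset.sum_smul]
    exact Finset.sum_congr rfl fun l _ => by split <;> simp
  rw [Finset.sum_congr rfl fun i _ => this i, Finset.sum_comm]
  apply Finset.sum_congr rfl
  intro l _
  simp

lemma dg_weight {m n : ℕ} (g : Fin m → Fin n) : ∑ i, dg g i = m := by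
  have := dg_smul_sum g (fun _ => (1 : ℕ))
  simpa using this

/-- the all-ones exponent -/
noncomputable def ones (n : ℕ) : Fin n →₀ ℕ := ∑ i, Finsupp.single i 1

lemma ones_apply {n : ℕ} (i : Fin n) : ones n i = 1 := by
  have : ones n = dg (id : Fin n → Fin n) := rfl
  rw [this, dg_apply]
  simp [Finset.filter_eq']

lemma dg_eq_ones_iff {m n : ℕ} (g : Fin m → Fin n) :
    dg g = ones n ↔ Function.Bijective g := by
  constructor
  · intro h
    have hc : ∀ i, (univ.filter (fun l => g l = i)).card = 1 := by
      intro i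
      rw [← dg_apply, h, ones_apply]
    constructor
    · intro l l' he
      obtain ⟨a, ha⟩ := Finset.card_eq_one.1 (hc (g l))
      have h1 : l ∈ univ.filter (fun x => g x = g l) := by simp
      have h2 : l' ∈ univ.filter (fun x => g x = g l) := by simp [he]
      rw [ha] at h1 h2
      simp at h1 h2; rw [h1, h2]
    · intro i
      obtain ⟨a, ha⟩ := Finset.card_eq_one.1 (hc i)
      have : a ∈ univ.filter (fun x => g x = i) := by rw [ha]; simp
      simp at this
      exact ⟨a, this⟩
  · intro hb
    ext i
    rw [dg_apply, ones_apply, Finset.card_eq_one]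
    obtain ⟨l, hl⟩ := hb.2 i
    refine ⟨l, ?_⟩
    ext x
    simp only [Finset.mem_filter, Finset.mem_univ, true_and, Finset.mem_singleton]
    constructor
    · intro hx; exact hb.1 (hx.trans hl.symm)
    · intro hx; rw [hx, hl]

noncomputable def mono {m n : ℕ} (g : Fin m → Fin n) : MvPolynomial (Fin n) ℂ := ∏ l, X (g l)

lemma prod_X_eq (m n : ℕ) (g : Fin m → Fin n) (s : Finset (Fin m)) :
    ∏ l ∈ s, (X (g l) : MvPolynomial (Fin n) ℂ)
      = monomial (∑ l ∈ s, Finsupp.single (g l) 1) 1 := by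
  induction s using Finset.cons_induction with
  | empty => simp
  | cons a s ha ih =>
      rw [Finset.prod_cons, ih, Finset.sum_cons, X, monomial_mul, one_mul]

lemma mono_eq {m n : ℕ} (g : Fin m → Fin n) : mono g = monomial (dg g) 1 :=
  prod_X_eq m n g univ

lemma coeff_C_mul_mono {m n : ℕ} (a : Fin n →₀ ℕ) (b : ℂ) (g : Fin m → Fin n) :
    coeff a (C b * mono g) = if dg g = a then b else 0 := by
  rw [mono_eq, C_mul_monomial, coeff_monomial, mul_one]

lemma prod_uvec {n m : ℕ} (Nv : Fin n → Idx d) (c : Fin n → ℂ) (Kv : Fin m → Idx d) :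
    (∏ l, uvec Nv c (Kv l))
      = ∑ g : Fin m → Fin n, ∏ l, (if Kv l = Nv (g l) then c (g l) else 0) := by
  unfold uvec
  rw [Finset.prod_univ_sum (fun _ => (univ : Finset (Fin n)))
    (fun l i => if Kv l = Nv i then c i else 0)]
  rw [Fintype.piFinset_univ]

lemma sumA {m n : ℕ} (Nv : Fin n → Idx d) (c : Fin n → ℂ) (h : (Fin m → Idx d) → ℂ) :
    ∑' Kv : Fin m → Idx d, h Kv * ∏ l, uvec Nv c (Kv l)
      = ∑ g : Fin m → Fin n, h (Nv ∘ g) * ∏ l, c (g l) := by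
  have key : ∀ Kv, h Kv * ∏ l, uvec Nv c (Kv l)
      = ∑ g : Fin m → Fin n, h Kv * ∏ l, (if Kv l = Nv (g l) then c (g l) else 0) := by
    intro Kv; rw [prod_uvec, Finset.mul_sum]
  have hz : ∀ (g : Fin m → Fin n) (Kv), Kv ≠ Nv ∘ g →
      h Kv * ∏ l, (if Kv l = Nv (g l) then c (g l) else 0) = 0 := by
    intro g Kv hne
    have : ∃ l, Kv l ≠ Nv (g l) := by
      by_contra hco
      push_neg at hco
      exact hne (funext hco)
    obtain ⟨l, hl⟩ := this
    have h0 : (if Kv l = Nv (g l) then c (g l) else 0) = 0 := if_neg hl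
    rw [Finset.prod_eq_zero (Finset.mem_univ l) h0, mul_zero]
  rw [tsum_congr key, Summable.tsum_finsetSum]
  · apply Finset.sum_congr rfl
    intro g _
    rw [tsum_eq_single (Nv ∘ g) (fun Kv hne => hz g Kv hne)]
    simp
  · intro g _
    apply summable_of_ne_finset_zero (s := {Nv ∘ g})
    intro Kv hK
    simp only [Finset.mem_singleton] at hK
    exact hz g Kv hK

end Aux
section Aux2

open MvPolynomial Finset

variable {d : ℕ}

lemma uvec_eq_zero {n : ℕ} {Nv : Fin n → Idx d} {c : Fin n → ℂ} {J : Idx d}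
    (hJ : J ∉ Finset.image Nv univ) : uvec Nv c J = 0 := by
  apply Finset.sum_eq_zero
  intro i _
  rw [if_neg]
  intro h
  exact hJ (Finset.mem_image.2 ⟨i, Finset.mem_univ i, h.symm⟩)

noncomputable def QP {m n : ℕ} (h : (Fin m → Idx d) → ℂ) (Nv : Fin n → Idx d) :
    MvPolynomial (Fin n) ℂ :=
  ∑ g : Fin m → Fin n, C (h (Nv ∘ g)) * mono g

lemma eval_QP {m n : ℕ} (h : (Fin m → Idx d) → ℂ) (Nv : Fin n → Idx d) (c : Fin n → ℂ) :
    eval c (QP h Nv) = ∑ g : Fin m → Fin n, h (Nv ∘ g) * ∏ l, c (g l) := by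
  simp [QP, mono]

lemma coeff_QP {m n : ℕ} (h : (Fin m → Idx d) → ℂ) (Nv : Fin n → Idx d) (a : Fin n →₀ ℕ) :
    coeff a (QP h Nv) = ∑ g : Fin m → Fin n, if dg g = a then h (Nv ∘ g) else 0 := by
  rw [QP]
  rw [MvPolynomial.coeff_sum]
  exact Finset.sum_congr rfl fun g _ => coeff_C_mul_mono a _ g

lemma polyEval_uvec {m n : ℕ} (P : Poly d m) (Nv : Fin n → Idx d) (c : Fin n → ℂ) :
    P.eval (uvec Nv c) = eval c (QP P.coeff Nv) := by
  rw [Poly.eval, sumA, eval_QP]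

lemma polyEval_of_coeff_zero {r : ℕ} (P : Poly d r) (u : Seq d)
    (hP : ∀ Jv, P.coeff Jv = 0) : P.eval u = 0 := by
  simp [Poly.eval, hP]

lemma polyPderiv_of_coeff_zero {r : ℕ} (P : Poly d r) (K : Idx d) (u : Seq d)
    (hP : ∀ Jv, P.coeff Jv = 0) : P.pderiv K u = 0 := by
  simp [Poly.pderiv, hP]

lemma polyPderiv_zeroDeg (P : Poly d 0) (K : Idx d) (u : Seq d) : P.pderiv K u = 0 := by
  simp [Poly.pderiv]

lemma prod_erase_zero {p : ℕ} (f : Fin (p + 1) → ℂ) :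
    ∏ m ∈ univ.erase 0, f m = ∏ i : Fin p, f i.succ := by
  apply Finset.prod_bij' (i := fun m hm => Fin.pred m (Finset.mem_erase.1 hm).1)
    (j := fun i _ => i.succ)
  · intro a ha; exact Finset.mem_univ _
  · intro a ha; exact Fin.succ_pred a _
  · intro a ha; exact Fin.pred_succ a
  · intro a ha; rw [Fin.succ_pred]
  · intro a ha; exact Finset.mem_erase.2 ⟨Fin.succ_ne_zero a, Finset.mem_univ _⟩

/-- one summand of the partial derivative -/
noncomputable def pdterm {r : ℕ} (co : (Fin r → Idx d) → ℂ) (K : Idx d) (u : Seq d)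
    (l : Fin r) (Kv : Fin r → Idx d) : ℂ :=
  if Kv l = K then co Kv * ∏ m ∈ univ.erase l, u (Kv m) else 0

lemma pderiv_eq_pdterm {r : ℕ} (P : Poly d r) (K : Idx d) (u : Seq d) :
    P.pderiv K u = ∑' Kv : Fin r → Idx d, ∑ l, pdterm P.coeff K u l Kv := rfl

lemma pdterm_supp {n r : ℕ} (P : Poly d r) (K : Idx d) (Nv : Fin n → Idx d) (c : Fin n → ℂ)
    (l : Fin r) :
    ∀ Kv ∉ Fintype.piFinset (fun _ : Fin r => insert K (Finset.image Nv univ)),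
      pdterm P.coeff K (uvec Nv c) l Kv = 0 := by
  intro Kv hKv
  rw [Fintype.mem_piFinset] at hKv
  push_neg at hKv
  obtain ⟨m, hm⟩ := hKv
  rw [pdterm]
  by_cases h : Kv l = K
  · rw [if_pos h]
    have hml : m ≠ l := by
      rintro rfl
      apply hm
      rw [h]
      exact Finset.mem_insert_self K _
    have h0 : uvec Nv c (Kv m) = 0 := by
      apply uvec_eq_zero
      intro hc; exact hm (Finset.mem_insert_of_mem hc)
    rw [Finset.prod_eq_zero (Finset.mem_erase.2 ⟨hml, Finset.mem_univ m⟩) h0, mul_zero]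
  · exact if_neg h

lemma polyPderiv_uvec {n p : ℕ} (P : Poly d (p + 1)) (Nv : Fin n → Idx d) (c : Fin n → ℂ)
    (K : Idx d) :
    P.pderiv K (uvec Nv c)
      = (p + 1 : ℂ) * eval c (QP (fun A => P.coeff (Fin.cons K A)) Nv) := by
  classical
  set u := uvec Nv c with hu
  have hswap : P.pderiv K u = ∑ l : Fin (p+1), ∑' Kv, pdterm P.coeff K u l Kv := by
    rw [pderiv_eq_pdterm, Summable.tsum_finsetSum]
    intro l _
    exact summable_of_ne_finset_zero (pdterm_supp P K Nv c l)
  have hterm0 : ∀ l, (∑' Kv, pdterm P.coeff K u l Kv) = ∑' Kv, pdterm P.coeff K u 0 Kv := by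
    intro l
    rw [← Equiv.tsum_eq (Equiv.arrowCongr (Equiv.swap (0 : Fin (p+1)) l) (Equiv.refl (Idx d)))
      (pdterm P.coeff K u l)]
    apply tsum_congr
    intro Kv
    have he : (Equiv.arrowCongr (Equiv.swap (0 : Fin (p+1)) l) (Equiv.refl (Idx d))) Kv
        = Kv ∘ (Equiv.swap (0 : Fin (p+1)) l) := by
      funext m
      simp [Equiv.arrowCongr, Equiv.symm_swap]
    rw [he]
    have h1 : (Kv ∘ (Equiv.swap (0 : Fin (p+1)) l)) l = Kv 0 := by
      simp [Equiv.swap_apply_right]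
    have h2 : P.coeff (Kv ∘ (Equiv.swap (0 : Fin (p+1)) l)) = P.coeff Kv :=
      P.symm (Equiv.swap 0 l) Kv
    have h3 : ∏ m ∈ univ.erase l, u ((Kv ∘ (Equiv.swap (0 : Fin (p+1)) l)) m)
        = ∏ m ∈ univ.erase 0, u (Kv m) := by
      apply Finset.prod_nbij' (i := fun m => Equiv.swap (0 : Fin (p+1)) l m)
        (j := fun m => Equiv.swap (0 : Fin (p+1)) l m)
      · intro a ha
        rcases Finset.mem_erase.1 ha with ⟨hal, _⟩
        refine Finset.mem_erase.2 ⟨?_, Finset.mem_univ _⟩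
        intro h0
        exact hal ((Equiv.swap (0 : Fin (p+1)) l).injective
          (h0.trans (Equiv.swap_apply_right 0 l).symm))
      · intro a ha
        rcases Finset.mem_erase.1 ha with ⟨ha0, _⟩
        refine Finset.mem_erase.2 ⟨?_, Finset.mem_univ _⟩
        intro h0
        exact ha0 ((Equiv.swap (0 : Fin (p+1)) l).injective
          (h0.trans (Equiv.swap_apply_left 0 l).symm))
      · intro a _; simp
      · intro a _; simp
      · intro a _; rfl
    rw [pdterm, pdterm, h1, h2, h3]
  have hcount : P.pderiv K u = (p + 1 : ℂ) * ∑' Kv, pdterm P.coeff K u 0 Kv := by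
    rw [hswap, Finset.sum_congr rfl (fun l _ => hterm0 l), Finset.sum_const, Finset.card_univ,
      Fintype.card_fin, nsmul_eq_mul]
    push_cast
    ring
  have hterm0eq : ∀ (K₀ : Idx d) (A : Fin p → Idx d),
      pdterm P.coeff K u 0 (Fin.cons K₀ A)
        = if K₀ = K then P.coeff (Fin.cons K₀ A) * ∏ i : Fin p, u (A i) else 0 := by
    intro K₀ A
    have hpe : ∏ m ∈ univ.erase 0, u ((Fin.cons K₀ A : Fin (p+1) → Idx d) m)
        = ∏ i : Fin p, u (A i) := by
      rw [prod_erase_zero]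
      simp only [Fin.cons_succ]
    rw [pdterm, Fin.cons_zero, hpe]
  have hsum2 : Summable (fun x : Idx d × (Fin p → Idx d) => pdterm P.coeff K u 0 (Fin.cons x.1 x.2)) := by
    apply summable_of_ne_finset_zero
      (s := (insert K (Finset.image Nv univ)) ×ˢ Fintype.piFinset (fun _ : Fin p => insert K (Finset.image Nv univ)))
    intro x hx
    apply pdterm_supp P K Nv c 0
    intro hmem
    rw [Fintype.mem_piFinset] at hmem
    apply hx
    rw [Finset.mem_product]
    constructor
    · have := hmem 0; rwa [Fin.cons_zero] at this
    · rw [Fintype.mem_piFinset]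
      intro i
      have := hmem i.succ; rwa [Fin.cons_succ] at this
  have hstep : (∑' Kv, pdterm P.coeff K u 0 Kv)
      = ∑' A : Fin p → Idx d, P.coeff (Fin.cons K A) * ∏ i : Fin p, u (A i) := by
    rw [← Equiv.tsum_eq (Fin.consEquiv (fun _ => Idx d)) (pdterm P.coeff K u 0)]
    have hc : ∀ x : Idx d × (Fin p → Idx d),
        pdterm P.coeff K u 0 ((Fin.consEquiv (fun _ => Idx d)) x)
          = pdterm P.coeff K u 0 (Fin.cons x.1 x.2) := fun x => rfl
    rw [tsum_congr hc, Summable.tsum_prod' hsum2 ?_]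
    · have hKr : ∀ K₀ : Idx d, (∑' A : Fin p → Idx d, pdterm P.coeff K u 0 (Fin.cons K₀ A))
          = if K₀ = K then (∑' A : Fin p → Idx d, P.coeff (Fin.cons K A) * ∏ i, u (A i)) else 0 := by
        intro K₀
        by_cases h : K₀ = K
        · subst h
          rw [if_pos rfl]
          apply tsum_congr
          intro A
          rw [hterm0eq, if_pos rfl]
        · rw [if_neg h]
          rw [tsum_congr (fun A => by rw [hterm0eq, if_neg h]), tsum_zero]
      rw [tsum_congr hKr, tsum_ite_eq]
    · intro K₀
      apply summable_of_ne_finset_zero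
        (s := Fintype.piFinset (fun _ : Fin p => insert K (Finset.image Nv univ)))
      intro A hA
      apply pdterm_supp P K Nv c 0
      intro hmem
      rw [Fintype.mem_piFinset] at hmem
      apply hA
      rw [Fintype.mem_piFinset]
      intro i
      have := hmem i.succ
      rwa [Fin.cons_succ] at this
  rw [hcount, hstep, hu, sumA, eval_QP]

end Aux2
section Aux3

open MvPolynomial Finset

variable {d : ℕ}

noncomputable def degSet (P : GPoly d) : Finset ℕ := P.finiteDegrees.toFinset

lemma coeff_eq_zero_of_not_degSet (P : GPoly d) {r : ℕ} (hr : r ∉ degSet P)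
    (Jv : Fin r → Idx d) : (P.part r).coeff Jv = 0 := by
  by_contra h
  exact hr (P.finiteDegrees.mem_toFinset.2 ⟨Jv, h⟩)

lemma gEval_uvec (P : GPoly d) {n : ℕ} (Nv : Fin n → Idx d) (c : Fin n → ℂ) :
    P.eval (uvec Nv c) = eval c (∑ r ∈ degSet P, QP (P.part r).coeff Nv) := by
  rw [GPoly.eval, tsum_eq_sum
    (fun r hr => polyEval_of_coeff_zero _ _ (coeff_eq_zero_of_not_degSet P hr)), map_sum]
  exact Finset.sum_congr rfl fun r _ => polyEval_uvec _ _ _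

noncomputable def pdPart (P : GPoly d) {n : ℕ} (Nv : Fin n → Idx d) :
    ℕ → Idx d → MvPolynomial (Fin n) ℂ
  | 0, _ => 0
  | (p+1), K => (p+1 : ℂ) • QP (fun A => (P.part (p+1)).coeff (Fin.cons K A)) Nv

noncomputable def pdP (P : GPoly d) {n : ℕ} (Nv : Fin n → Idx d) (K : Idx d) :
    MvPolynomial (Fin n) ℂ :=
  ∑ r ∈ degSet P, pdPart P Nv r K

lemma gPderiv_uvec (P : GPoly d) {n : ℕ} (Nv : Fin n → Idx d) (c : Fin n → ℂ) (K : Idx d) :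
    P.pderiv K (uvec Nv c) = eval c (pdP P Nv K) := by
  rw [GPoly.pderiv, tsum_eq_sum
    (fun r hr => polyPderiv_of_coeff_zero _ _ _ (coeff_eq_zero_of_not_degSet P hr)),
    pdP, map_sum]
  apply Finset.sum_congr rfl
  intro r _
  cases r with
  | zero => rw [polyPderiv_zeroDeg]; simp [pdPart]
  | succ p =>
      rw [polyPderiv_uvec]
      simp [pdPart, MvPolynomial.smul_eq_C_mul]

lemma momentum_cons {r : ℕ} (K : Idx d) (A : Fin r → Idx d) :
    momentum (Fin.cons K A) = sgn K.2 • K.1 + momentum A := by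
  rw [momentum, Fin.sum_univ_succ]
  simp only [Fin.cons_succ, Fin.cons_zero]
  rfl

noncomputable def msum {n : ℕ} (Nv : Fin n → Idx d) (a : Fin n →₀ ℕ) : Zd d :=
  ∑ i, a i • (sgn ((Nv i).2) • ((Nv i).1))

lemma momentum_comp {m n : ℕ} (Nv : Fin n → Idx d) (g : Fin m → Fin n) :
    momentum (Nv ∘ g) = msum Nv (dg g) := by
  rw [msum, dg_smul_sum g (fun i => sgn ((Nv i).2) • ((Nv i).1))]
  rfl

noncomputable def jpin {n : ℕ} (Nv : Fin n → Idx d) (σ : Bool) (a : Fin n →₀ ℕ) : Zd d :=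
  if σ then -msum Nv a else msum Nv a

lemma coeff_pdPart (P : GPoly d) {n : ℕ} (Nv : Fin n → Idx d) (p : ℕ) (K : Idx d)
    (a : Fin n →₀ ℕ) :
    coeff a (pdPart P Nv (p+1) K)
      = (p+1 : ℂ) * ∑ g : Fin p → Fin n,
          (if dg g = a then (P.part (p+1)).coeff (Fin.cons K (Nv ∘ g)) else 0) := by
  rw [pdPart, MvPolynomial.coeff_smul, coeff_QP, smul_eq_mul]

lemma mom_pin {n p : ℕ} {Nv : Fin n → Idx d} {j : Zd d} {σ : Bool} {g : Fin p → Fin n}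
    (h : momentum (Fin.cons (j, σ) (Nv ∘ g)) = 0) : j = jpin Nv σ (dg g) := by
  rw [momentum_cons, momentum_comp] at h
  cases σ with
  | true =>
      have h1 : j + msum Nv (dg g) = 0 := by
        have : sgn true • j = j := one_smul _ j
        rwa [this] at h
      rw [jpin, if_pos rfl]
      rw [add_eq_zero_iff_eq_neg] at h1
      exact h1
  | false =>
      have h1 : -j + msum Nv (dg g) = 0 := by
        have : sgn false • j = -j := by
          show (-1 : ℤ) • j = -j
          rw [neg_smul, one_smul]
        rwa [this] at h
      rw [jpin, if_neg (by simp)]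
      rw [neg_add_eq_zero] at h1
      exact h1

lemma coeff_pdP_eq_zero {P : GPoly d} {n : ℕ} {Nv : Fin n → Idx d} {j : Zd d} {σ : Bool}
    {a : Fin n →₀ ℕ} (hne : j ≠ jpin Nv σ a) : coeff a (pdP P Nv (j, σ)) = 0 := by
  rw [pdP, MvPolynomial.coeff_sum]
  apply Finset.sum_eq_zero
  intro r _
  cases r with
  | zero => simp [pdPart]
  | succ p =>
      rw [coeff_pdPart]
      rw [Finset.sum_eq_zero, mul_zero]
      intro g _
      by_cases hdg : dg g = a
      · rw [if_pos hdg]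
        by_contra hc
        have hmom := (P.part (p+1)).mom _ hc
        exact hne (hdg ▸ mom_pin hmom)
      · exact if_neg hdg

lemma pdP_suppfin (P : GPoly d) {n : ℕ} (Nv : Fin n → Idx d) (σ : Bool) :
    {j : Zd d | pdP P Nv (j, σ) ≠ 0}.Finite := by
  apply Set.Finite.subset (Set.Finite.biUnion (degSet P).finite_toSet
    (fun r _ => (Set.finite_range (fun g : Fin (r-1) → Fin n => msum Nv (dg g))).union
      (Set.finite_range (fun g : Fin (r-1) → Fin n => -msum Nv (dg g)))))
  intro j hj
  simp only [Set.mem_setOf_eq] at hj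
  obtain ⟨a, ha⟩ := MvPolynomial.ne_zero_iff.1 hj
  rw [pdP, MvPolynomial.coeff_sum] at ha
  obtain ⟨r, hr, hra⟩ := Finset.exists_ne_zero_of_sum_ne_zero ha
  simp only [Set.mem_iUnion]
  refine ⟨r, hr, ?_⟩
  cases r with
  | zero => simp [pdPart] at hra
  | succ p =>
      rw [coeff_pdPart] at hra
      have h2 : (∑ g : Fin p → Fin n,
          (if dg g = a then (P.part (p+1)).coeff (Fin.cons (j,σ) (Nv ∘ g)) else 0)) ≠ 0 := by
        intro h0; rw [h0, mul_zero] at hra; exact hra rfl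
      obtain ⟨g, _, hg⟩ := Finset.exists_ne_zero_of_sum_ne_zero h2
      have hdg : dg g = a ∧ (P.part (p+1)).coeff (Fin.cons (j,σ) (Nv ∘ g)) ≠ 0 := by
        by_cases hd : dg g = a
        · exact ⟨hd, by rwa [if_pos hd] at hg⟩
        · rw [if_neg hd] at hg; exact absurd rfl hg
      have hmom := (P.part (p+1)).mom _ hdg.2
      have := mom_pin hmom
      cases σ with
      | true =>
          rw [jpin, if_pos rfl] at this
          exact Set.mem_union_right _ ⟨g, this.symm⟩
      | false =>
          rw [jpin, if_neg (by simp)] at this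
          exact Set.mem_union_left _ ⟨g, this.symm⟩

noncomputable def Tset (P G : GPoly d) {n : ℕ} (Nv : Fin n → Idx d) : Finset (Zd d) :=
  (((pdP_suppfin P Nv false).union (pdP_suppfin P Nv true)).union
    ((pdP_suppfin G Nv false).union (pdP_suppfin G Nv true))).toFinset

lemma not_mem_Tset {P G : GPoly d} {n : ℕ} {Nv : Fin n → Idx d} {j : Zd d}
    (hj : j ∉ Tset P G Nv) :
    pdP P Nv (j, false) = 0 ∧ pdP P Nv (j, true) = 0 ∧
      pdP G Nv (j, false) = 0 ∧ pdP G Nv (j, true) = 0 := by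
  rw [Tset, Set.Finite.mem_toFinset] at hj
  simp only [Set.mem_union, Set.mem_setOf_eq, not_or, not_not] at hj
  exact ⟨hj.1.1, hj.1.2, hj.2.1, hj.2.2⟩

noncomputable def brP (P G : GPoly d) {n : ℕ} (Nv : Fin n → Idx d) : MvPolynomial (Fin n) ℂ :=
  C Complex.I * ∑ j ∈ Tset P G Nv,
    (pdP P Nv (j, false) * pdP G Nv (j, true) - pdP P Nv (j, true) * pdP G Nv (j, false))

lemma bracket_poly_eq {Q P G : GPoly d} (hQ : IsBracket Q P G) {n : ℕ} (Nv : Fin n → Idx d) :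
    (∑ r ∈ degSet Q, QP (Q.part r).coeff Nv) = brP P G Nv := by
  apply MvPolynomial.funext
  intro c
  rw [← gEval_uvec, hQ (uvec Nv c) (uvec_suppfin Nv c)]
  have h1 : ∀ j : Zd d,
      (P.pderiv (j, false) (uvec Nv c) * G.pderiv (j, true) (uvec Nv c)
        - P.pderiv (j, true) (uvec Nv c) * G.pderiv (j, false) (uvec Nv c))
      = eval c (pdP P Nv (j, false)) * eval c (pdP G Nv (j, true))
        - eval c (pdP P Nv (j, true)) * eval c (pdP G Nv (j, false)) := by
    intro j
    rw [gPderiv_uvec, gPderiv_uvec, gPderiv_uvec, gPderiv_uvec]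
  rw [tsum_congr h1, tsum_eq_sum (s := Tset P G Nv) ?_]
  · rw [brP, map_mul, eval_C, map_sum]
    congr 1
    apply Finset.sum_congr rfl
    intro j _
    rw [map_sub, map_mul, map_mul]
  · intro j hj
    obtain ⟨z1, z2, z3, z4⟩ := not_mem_Tset hj
    rw [z1, z2, z3, z4]
    simp

lemma coeff_ones_QP_single (Q : GPoly d) {n r : ℕ} (Nv : Fin n → Idx d) (hr : r ≠ n) :
    coeff (ones n) (QP (Q.part r).coeff Nv) = 0 := by
  rw [coeff_QP]
  apply Finset.sum_eq_zero
  intro g _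
  rw [if_neg]
  intro hdg
  apply hr
  have h1 : ∑ i, dg g i = ∑ i, ones n i := by rw [hdg]
  rw [dg_weight] at h1
  simp only [ones_apply] at h1
  simpa using h1

lemma card_bijective (n : ℕ) :
    (univ.filter (fun g : Fin n → Fin n => Function.Bijective g)).card = n.factorial := by
  rw [← Fintype.card_subtype]
  have e : {g : Fin n → Fin n // Function.Bijective g} ≃ Equiv.Perm (Fin n) :=
    { toFun := fun gp => Equiv.ofBijective gp.1 gp.2
      invFun := fun e => ⟨e, e.bijective⟩
      left_inv := fun gp => Subtype.ext rfl
      right_inv := fun e => Equiv.ext fun x => rfl }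
  rw [Fintype.card_congr e, Fintype.card_perm, Fintype.card_fin]

lemma coeff_ones_QPsum (Q : GPoly d) {n : ℕ} (Nv : Fin n → Idx d) :
    coeff (ones n) (∑ r ∈ degSet Q, QP (Q.part r).coeff Nv)
      = (n.factorial : ℂ) * (Q.part n).coeff Nv := by
  have hval : coeff (ones n) (QP (Q.part n).coeff Nv)
      = (n.factorial : ℂ) * (Q.part n).coeff Nv := by
    rw [coeff_QP]
    have hc : ∀ g : Fin n → Fin n,
        (if dg g = ones n then (Q.part n).coeff (Nv ∘ g) else 0)
          = (if Function.Bijective g then (Q.part n).coeff Nv else 0) := by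
      intro g
      by_cases hb : Function.Bijective g
      · rw [if_pos ((dg_eq_ones_iff g).2 hb), if_pos hb]
        have := (Q.part n).symm (Equiv.ofBijective g hb) Nv
        exact this
      · rw [if_neg (fun h => hb ((dg_eq_ones_iff g).1 h)), if_neg hb]
    rw [Finset.sum_congr rfl (fun g _ => hc g), ← Finset.sum_filter, Finset.sum_const,
      card_bijective, nsmul_eq_mul]
  rw [MvPolynomial.coeff_sum]
  rw [Finset.sum_eq_single n (fun r _ hr => coeff_ones_QP_single Q Nv hr)
    (fun hn => by rw [hval, coeff_eq_zero_of_not_degSet Q hn, mul_zero])]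
  exact hval

lemma key_coeff {Q P G : GPoly d} (hQ : IsBracket Q P G) {n : ℕ} (Nv : Fin n → Idx d) :
    (n.factorial : ℂ) * (Q.part n).coeff Nv = coeff (ones n) (brP P G Nv) := by
  rw [← coeff_ones_QPsum, bracket_poly_eq hQ]

end Aux3
section Aux4

open MvPolynomial Finset

variable {d : ℕ}

noncomputable def supC {r : ℕ} (P : Poly d r) : ℝ := ⨆ Jv, ‖P.coeff Jv‖

lemma bddAbove_coeff {r : ℕ} (P : Poly d r) :
    BddAbove (Set.range fun Jv => ‖P.coeff Jv‖) := by
  obtain ⟨M, hM⟩ := P.bdd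
  exact ⟨M, by rintro x ⟨Jv, rfl⟩; exact hM Jv⟩

lemma le_supC {r : ℕ} (P : Poly d r) (Jv : Fin r → Idx d) :
    ‖P.coeff Jv‖ ≤ supC P :=
  le_ciSup (bddAbove_coeff P) Jv

lemma supC_nonneg {r : ℕ} (P : Poly d r) : 0 ≤ supC P :=
  le_trans (norm_nonneg _) (le_supC P (fun _ => ((fun _ => 0), true)))

lemma supC_zero {r : ℕ} (P : Poly d r) (h : ∀ Jv, P.coeff Jv = 0) : supC P = 0 :=
  le_antisymm (ciSup_le fun Jv => by rw [h]; simp) (supC_nonneg P)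

lemma polyNorm_eq {r : ℕ} (P : Poly d r) (R : ℝ) : P.norm R = supC P * R ^ r := rfl

def wt {n : ℕ} (a : Fin n →₀ ℕ) : ℕ := ∑ i, a i

lemma abs_coeff_pdP_le (P : GPoly d) {n : ℕ} (Nv : Fin n → Idx d) (K : Idx d) (a : Fin n →₀ ℕ) :
    ‖coeff a (pdP P Nv K)‖
      ≤ ((wt a : ℝ) + 1) * (n:ℝ)^(wt a) * supC (P.part (wt a + 1)) := by
  have hB0 : 0 ≤ ((wt a : ℝ) + 1) * (n:ℝ)^(wt a) * supC (P.part (wt a + 1)) := by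
    apply mul_nonneg (mul_nonneg (by positivity) (by positivity)) (supC_nonneg _)
  rw [pdP, MvPolynomial.coeff_sum]
  refine le_trans (norm_sum_le _ _) ?_
  have hterm : ∀ r ∈ degSet P, ‖coeff a (pdPart P Nv r K)‖
      ≤ if r = wt a + 1 then ((wt a : ℝ) + 1) * (n:ℝ)^(wt a) * supC (P.part (wt a + 1)) else 0 := by
    intro r _
    cases r with
    | zero =>
        rw [if_neg (by omega)]
        simp [pdPart]
    | succ p =>
        by_cases hp : p = wt a
        · rw [if_pos (by omega), ← hp]
          rw [coeff_pdPart, norm_mul]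
          have h1 : ‖(p:ℂ)+1‖ = (p : ℝ) + 1 := by
            have h2 : ((p:ℂ)+1) = ((p+1 : ℕ) : ℂ) := by push_cast; ring
            rw [h2, Complex.norm_natCast]
            push_cast; ring
          rw [h1]
          have h3 : ‖∑ g : Fin p → Fin n,
              (if dg g = a then (P.part (p+1)).coeff (Fin.cons K (Nv ∘ g)) else 0)‖
              ≤ (n:ℝ)^p * supC (P.part (p+1)) := by
            refine le_trans (norm_sum_le _ _) ?_
            have h4 : ∀ g : Fin p → Fin n, ‖if dg g = a then (P.part (p+1)).coeff (Fin.cons K (Nv ∘ g)) else 0‖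
                ≤ supC (P.part (p+1)) := by
              intro g
              by_cases hg : dg g = a
              · rw [if_pos hg]; exact le_supC _ _
              · rw [if_neg hg]; simpa using supC_nonneg (P.part (p+1))
            refine le_trans (Finset.sum_le_sum (fun g _ => h4 g)) ?_
            rw [Finset.sum_const, Finset.card_univ, Fintype.card_fun, Fintype.card_fin,
              Fintype.card_fin, nsmul_eq_mul]
            push_cast
            exact le_rfl
          calc ((p:ℝ) + 1) * ‖∑ g : Fin p → Fin n,
              (if dg g = a then (P.part (p+1)).coeff (Fin.cons K (Nv ∘ g)) else 0)‖
              ≤ ((p:ℝ) + 1) * ((n:ℝ)^p * supC (P.part (p+1))) := by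
                apply mul_le_mul_of_nonneg_left h3 (by positivity)
            _ = ((p:ℝ) + 1) * (n:ℝ)^p * supC (P.part (p+1)) := by ring
        · rw [if_neg (by omega)]
          have hz : coeff a (pdPart P Nv (p+1) K) = 0 := by
            rw [coeff_pdPart]
            rw [Finset.sum_eq_zero, mul_zero]
            intro g _
            rw [if_neg]
            intro hdg
            apply hp
            have hw := dg_weight g
            rw [hdg] at hw
            rw [← hw]
            rfl
          rw [hz]
          simp
  refine le_trans (Finset.sum_le_sum hterm) ?_
  rw [Finset.sum_ite_eq' (degSet P) (wt a + 1)]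
  split
  · exact le_rfl
  · exact hB0

lemma sum_T_prod_bound (P G : GPoly d) {n : ℕ} (Nv : Fin n → Idx d) (σ₁ σ₂ : Bool)
    (a b : Fin n →₀ ℕ) :
    ‖∑ j ∈ Tset P G Nv, coeff a (pdP P Nv (j,σ₁)) * coeff b (pdP G Nv (j,σ₂))‖
      ≤ (((wt a : ℝ) + 1) * (n:ℝ)^(wt a) * supC (P.part (wt a + 1)))
        * (((wt b : ℝ) + 1) * (n:ℝ)^(wt b) * supC (G.part (wt b + 1))) := by
  rw [Finset.sum_eq_single (jpin Nv σ₁ a)]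
  · rw [norm_mul]
    apply mul_le_mul (abs_coeff_pdP_le P Nv _ a) (abs_coeff_pdP_le G Nv _ b)
      (norm_nonneg _)
      (mul_nonneg (mul_nonneg (by positivity) (by positivity)) (supC_nonneg _))
  · intro j _ hne
    rw [coeff_pdP_eq_zero hne, zero_mul]
  · intro hnot
    obtain ⟨z1, z2, _, _⟩ := not_mem_Tset hnot
    cases σ₁ with
    | false => rw [z1]; simp
    | true => rw [z2]; simp

lemma part_coeff_bound {Q P G : GPoly d} (hQ : IsBracket Q P G) (n : ℕ) (Nv : Fin n → Idx d) :
    ‖(Q.part n).coeff Nv‖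
      ≤ ∑ x ∈ Finset.HasAntidiagonal.antidiagonal (ones n),
          2 * ((((wt x.1 : ℝ)) + 1) * (n:ℝ)^(wt x.1) * supC (P.part (wt x.1 + 1)))
            * ((((wt x.2 : ℝ)) + 1) * (n:ℝ)^(wt x.2) * supC (G.part (wt x.2 + 1))) := by
  have h0 : ‖(Q.part n).coeff Nv‖
      ≤ ‖(n.factorial : ℂ) * (Q.part n).coeff Nv‖ := by
    rw [norm_mul, Complex.norm_natCast]
    exact le_mul_of_one_le_left (norm_nonneg _)
      (Nat.one_le_cast.2 n.factorial_pos)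
  refine h0.trans ?_
  rw [key_coeff hQ Nv, brP, MvPolynomial.coeff_C_mul, norm_mul, Complex.norm_I, one_mul]
  rw [MvPolynomial.coeff_sum]
  have hrew : ∀ j ∈ Tset P G Nv, coeff (ones n)
      (pdP P Nv (j, false) * pdP G Nv (j, true) - pdP P Nv (j, true) * pdP G Nv (j, false))
      = (∑ x ∈ Finset.HasAntidiagonal.antidiagonal (ones n),
          coeff x.1 (pdP P Nv (j, false)) * coeff x.2 (pdP G Nv (j, true)))
        - (∑ x ∈ Finset.HasAntidiagonal.antidiagonal (ones n),
          coeff x.1 (pdP P Nv (j, true)) * coeff x.2 (pdP G Nv (j, false))) := by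
    intro j _
    rw [MvPolynomial.coeff_sub, MvPolynomial.coeff_mul, MvPolynomial.coeff_mul]
  rw [Finset.sum_congr rfl hrew, Finset.sum_sub_distrib, Finset.sum_comm, Finset.sum_comm
    (s := Tset P G Nv), ← Finset.sum_sub_distrib]
  refine le_trans (norm_sum_le _ _) ?_
  apply Finset.sum_le_sum
  intro x _
  have hsub : ‖(∑ j ∈ Tset P G Nv, coeff x.1 (pdP P Nv (j, false)) * coeff x.2 (pdP G Nv (j, true)))
        - (∑ j ∈ Tset P G Nv, coeff x.1 (pdP P Nv (j, true)) * coeff x.2 (pdP G Nv (j, false)))‖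
      ≤ ‖∑ j ∈ Tset P G Nv, coeff x.1 (pdP P Nv (j, false)) * coeff x.2 (pdP G Nv (j, true))‖
        + ‖∑ j ∈ Tset P G Nv, coeff x.1 (pdP P Nv (j, true)) * coeff x.2 (pdP G Nv (j, false))‖ := by
    rw [sub_eq_add_neg]
    refine le_trans (norm_add_le _ _) ?_
    rw [norm_neg]
  refine hsub.trans ?_
  have b1 := sum_T_prod_bound P G Nv false true x.1 x.2
  have b2 := sum_T_prod_bound P G Nv true false x.1 x.2
  calc ‖_‖ + ‖_‖
      ≤ (((wt x.1 : ℝ) + 1) * (n:ℝ)^(wt x.1) * supC (P.part (wt x.1 + 1)))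
        * (((wt x.2 : ℝ) + 1) * (n:ℝ)^(wt x.2) * supC (G.part (wt x.2 + 1)))
      + (((wt x.1 : ℝ) + 1) * (n:ℝ)^(wt x.1) * supC (P.part (wt x.1 + 1)))
        * (((wt x.2 : ℝ) + 1) * (n:ℝ)^(wt x.2) * supC (G.part (wt x.2 + 1))) := add_le_add b1 b2
    _ = 2 * ((((wt x.1 : ℝ)) + 1) * (n:ℝ)^(wt x.1) * supC (P.part (wt x.1 + 1)))
            * ((((wt x.2 : ℝ)) + 1) * (n:ℝ)^(wt x.2) * supC (G.part (wt x.2 + 1))) := by ring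

end Aux4
section Aux5

open MvPolynomial Finset

variable {d : ℕ}

def DegLe (P : GPoly d) (D : ℕ) : Prop := ∀ r, D < r → ∀ Jv, (P.part r).coeff Jv = 0

lemma wt_ones (n : ℕ) : wt (ones n) = n := by simp [wt, ones_apply]

lemma wt_add {n : ℕ} (a b : Fin n →₀ ℕ) : wt (a + b) = wt a + wt b := by
  simp [wt, Finsupp.add_apply, Finset.sum_add_distrib]

lemma antidiag_wt {n : ℕ} {x : (Fin n →₀ ℕ) × (Fin n →₀ ℕ)}
    (hx : x ∈ Finset.HasAntidiagonal.antidiagonal (ones n)) : wt x.1 + wt x.2 = n := by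
  rw [← wt_add, Finset.HasAntidiagonal.mem_antidiagonal.1 hx, wt_ones]

lemma card_antidiag_le (n : ℕ) : (Finset.HasAntidiagonal.antidiagonal (ones n)).card ≤ 2 ^ n := by
  have h := Finset.card_le_card_of_injOn
    (s := Finset.HasAntidiagonal.antidiagonal (ones n))
    (f := fun x : (Fin n →₀ ℕ) × (Fin n →₀ ℕ) => x.1.support)
    (t := (univ : Finset (Finset (Fin n)))) (fun x _ => mem_univ _) ?_
  · refine h.trans ?_
    rw [Finset.card_univ, Fintype.card_finset, Fintype.card_fin]
  · intro x hx y hy hxy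
    simp only [Finset.mem_coe] at hx hy
    have hxy' : x.1.support = y.1.support := hxy
    have hx1 : x.1 + x.2 = ones n := Finset.HasAntidiagonal.mem_antidiagonal.1 hx
    have hy1 : y.1 + y.2 = ones n := Finset.HasAntidiagonal.mem_antidiagonal.1 hy
    have happx : ∀ i, x.1 i + x.2 i = 1 := by
      intro i
      have := DFunLike.congr_fun hx1 i
      rwa [Finsupp.add_apply, ones_apply] at this
    have happy : ∀ i, y.1 i + y.2 i = 1 := by
      intro i
      have := DFunLike.congr_fun hy1 i
      rwa [Finsupp.add_apply, ones_apply] at this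
    have h1 : x.1 = y.1 := by
      ext i
      have hxi := happx i
      have hyi := happy i
      by_cases hi : i ∈ x.1.support
      · have hi' : i ∈ y.1.support := by rw [← hxy']; exact hi
        have e1 := Finsupp.mem_support_iff.1 hi
        have e2 := Finsupp.mem_support_iff.1 hi'
        omega
      · have hi' : i ∉ y.1.support := by rw [← hxy']; exact hi
        have e1 := Finsupp.notMem_support_iff.1 hi
        have e2 := Finsupp.notMem_support_iff.1 hi'
        omega
    have h2 : x.2 = y.2 := by
      ext i
      have hxi := happx i
      have hyi := happy i
      have := DFunLike.congr_fun h1 i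
      omega
    exact Prod.ext h1 h2

lemma partNorm_nonneg {r : ℕ} (P : Poly d r) {R : ℝ} (hR : 0 ≤ R) : 0 ≤ P.norm R :=
  mul_nonneg (supC_nonneg _) (pow_nonneg hR r)

lemma summable_partNorm (P : GPoly d) (R : ℝ) : Summable (fun r => (P.part r).norm R) := by
  apply summable_of_ne_finset_zero (s := degSet P)
  intro r hr
  rw [polyNorm_eq, supC_zero _ (coeff_eq_zero_of_not_degSet P hr), zero_mul]

lemma gnorm_eq (P : GPoly d) (R : ℝ) : P.norm R = ∑ r ∈ degSet P, (P.part r).norm R := by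
  apply tsum_eq_sum
  intro r hr
  rw [polyNorm_eq, supC_zero _ (coeff_eq_zero_of_not_degSet P hr), zero_mul]

lemma gnorm_nonneg (P : GPoly d) {R : ℝ} (hR : 0 ≤ R) : 0 ≤ P.norm R := by
  rw [gnorm_eq]
  exact Finset.sum_nonneg (fun r _ => partNorm_nonneg _ hR)

noncomputable def Cn (n : ℕ) : ℝ := 2 * ((n:ℝ)+1)^2 * (n:ℝ)^n * 2^n

lemma Cn_nonneg (n : ℕ) : 0 ≤ Cn n := by
  unfold Cn
  positivity

lemma part_norm_bound {Q P G : GPoly d} (hQ : IsBracket Q P G) (n : ℕ) (R : ℝ) (hR : 0 < R) :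
    (Q.part n).norm R * R^2
      ≤ Cn n * ∑ k ∈ Finset.range (n+1), (P.part (n - k + 1)).norm R * (G.part (k + 1)).norm R := by
  have hsup : supC (Q.part n) ≤ ∑ x ∈ Finset.HasAntidiagonal.antidiagonal (ones n),
      2 * ((((wt x.1 : ℝ)) + 1) * (n:ℝ)^(wt x.1) * supC (P.part (wt x.1 + 1)))
        * ((((wt x.2 : ℝ)) + 1) * (n:ℝ)^(wt x.2) * supC (G.part (wt x.2 + 1))) :=
    ciSup_le (part_coeff_bound hQ n)
  have hRn : (0:ℝ) ≤ R^n * R^2 := by positivity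
  have hstep1 : (Q.part n).norm R * R^2
      ≤ (∑ x ∈ Finset.HasAntidiagonal.antidiagonal (ones n),
          2 * ((((wt x.1 : ℝ)) + 1) * (n:ℝ)^(wt x.1) * supC (P.part (wt x.1 + 1)))
            * ((((wt x.2 : ℝ)) + 1) * (n:ℝ)^(wt x.2) * supC (G.part (wt x.2 + 1)))) * (R^n * R^2) := by
    rw [polyNorm_eq, mul_assoc]
    exact mul_le_mul_of_nonneg_right hsup hRn
  refine hstep1.trans ?_
  rw [Finset.sum_mul]
  have hper : ∀ x ∈ Finset.HasAntidiagonal.antidiagonal (ones n),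
      2 * ((((wt x.1 : ℝ)) + 1) * (n:ℝ)^(wt x.1) * supC (P.part (wt x.1 + 1)))
        * ((((wt x.2 : ℝ)) + 1) * (n:ℝ)^(wt x.2) * supC (G.part (wt x.2 + 1))) * (R^n * R^2)
      ≤ ∑ k ∈ Finset.range (n+1), (if wt x.2 = k then
          2 * ((n:ℝ)+1)^2 * (n:ℝ)^n * ((P.part (n - k + 1)).norm R * (G.part (k + 1)).norm R)
        else 0) := by
    intro x hx
    have hw := antidiag_wt hx
    have hk : wt x.2 ∈ Finset.range (n+1) := Finset.mem_range.2 (by omega)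
    rw [Finset.sum_ite_eq (Finset.range (n+1)) (wt x.2), if_pos hk]
    have hix : n - wt x.2 = wt x.1 := by omega
    rw [hix]
    rw [polyNorm_eq, polyNorm_eq]
    have e1 : (n:ℝ)^(wt x.1) * (n:ℝ)^(wt x.2) = (n:ℝ)^n := by rw [← pow_add, hw]
    have e2 : R^n * R^2 = R^(wt x.1 + 1) * R^(wt x.2 + 1) := by
      rw [← pow_add, ← pow_add]
      congr 1
      omega
    have e3 : ((wt x.1:ℝ)+1) * ((wt x.2:ℝ)+1) ≤ ((n:ℝ)+1)^2 := by
      have h1 : (wt x.1 : ℝ) + 1 ≤ (n:ℝ)+1 := by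
        have : wt x.1 ≤ n := by omega
        have := (Nat.cast_le (α := ℝ)).2 this
        linarith
      have h2 : (wt x.2 : ℝ) + 1 ≤ (n:ℝ)+1 := by
        have : wt x.2 ≤ n := by omega
        have := (Nat.cast_le (α := ℝ)).2 this
        linarith
      have h3 : (0:ℝ) ≤ (wt x.1 : ℝ) + 1 := by positivity
      have h4 : (0:ℝ) ≤ (wt x.2 : ℝ) + 1 := by positivity
      calc ((wt x.1:ℝ)+1) * ((wt x.2:ℝ)+1) ≤ ((n:ℝ)+1) * ((n:ℝ)+1) :=
            mul_le_mul h1 h2 h4 (by positivity)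
        _ = ((n:ℝ)+1)^2 := (sq ((n:ℝ)+1)).symm
    have hT : (0:ℝ) ≤ 2 * (n:ℝ)^n * supC (P.part (wt x.1 + 1)) * supC (G.part (wt x.2 + 1))
        * (R^(wt x.1 + 1) * R^(wt x.2 + 1)) := by
      have s1 := supC_nonneg (P.part (wt x.1 + 1))
      have s2 := supC_nonneg (G.part (wt x.2 + 1))
      have hn' : (0:ℝ) ≤ (n:ℝ)^n := by positivity
      have hRR : (0:ℝ) ≤ R^(wt x.1 + 1) * R^(wt x.2 + 1) := by positivity
      exact mul_nonneg (mul_nonneg (mul_nonneg (mul_nonneg (by norm_num) hn') s1) s2) hRR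
    calc 2 * ((((wt x.1 : ℝ)) + 1) * (n:ℝ)^(wt x.1) * supC (P.part (wt x.1 + 1)))
          * ((((wt x.2 : ℝ)) + 1) * (n:ℝ)^(wt x.2) * supC (G.part (wt x.2 + 1))) * (R^n * R^2)
        = (((wt x.1:ℝ)+1) * ((wt x.2:ℝ)+1))
          * (2 * (n:ℝ)^n * supC (P.part (wt x.1 + 1)) * supC (G.part (wt x.2 + 1))
            * (R^(wt x.1 + 1) * R^(wt x.2 + 1))) := by
          rw [e2, ← e1]; ring
      _ ≤ (((n:ℝ)+1)^2)
          * (2 * (n:ℝ)^n * supC (P.part (wt x.1 + 1)) * supC (G.part (wt x.2 + 1))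
            * (R^(wt x.1 + 1) * R^(wt x.2 + 1))) := mul_le_mul_of_nonneg_right e3 hT
      _ = 2 * ((n:ℝ)+1)^2 * (n:ℝ)^n * (supC (P.part (wt x.1 + 1)) * R^(wt x.1 + 1)
            * (supC (G.part (wt x.2 + 1)) * R^(wt x.2 + 1))) := by ring
  refine (Finset.sum_le_sum hper).trans ?_
  rw [Finset.sum_comm]
  have hper2 : ∀ k ∈ Finset.range (n+1),
      (∑ x ∈ Finset.HasAntidiagonal.antidiagonal (ones n), (if wt x.2 = k then
          2 * ((n:ℝ)+1)^2 * (n:ℝ)^n * ((P.part (n - k + 1)).norm R * (G.part (k + 1)).norm R)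
        else 0))
      ≤ (2:ℝ)^n * (2 * ((n:ℝ)+1)^2 * (n:ℝ)^n * ((P.part (n - k + 1)).norm R * (G.part (k + 1)).norm R)) := by
    intro k _
    have hval : (0:ℝ) ≤ 2 * ((n:ℝ)+1)^2 * (n:ℝ)^n * ((P.part (n - k + 1)).norm R * (G.part (k + 1)).norm R) := by
      have := partNorm_nonneg (P.part (n - k + 1)) hR.le
      have := partNorm_nonneg (G.part (k + 1)) hR.le
      positivity
    refine le_trans (Finset.sum_le_card_nsmul _ _
        (2 * ((n:ℝ)+1)^2 * (n:ℝ)^n * ((P.part (n - k + 1)).norm R * (G.part (k + 1)).norm R))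
        (fun x _ => ?_)) ?_
    · split
      · exact le_rfl
      · exact hval
    · rw [nsmul_eq_mul]
      apply mul_le_mul_of_nonneg_right _ hval
      calc ((Finset.HasAntidiagonal.antidiagonal (ones n)).card : ℝ) ≤ ((2^n : ℕ) : ℝ) :=
          Nat.cast_le.2 (card_antidiag_le n)
        _ = (2:ℝ)^n := by push_cast; ring
  refine (Finset.sum_le_sum hper2).trans ?_
  have hcong : ∀ k ∈ Finset.range (n+1),
      (2:ℝ)^n * (2 * ((n:ℝ)+1)^2 * (n:ℝ)^n * ((P.part (n - k + 1)).norm R * (G.part (k + 1)).norm R))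
      = Cn n * ((P.part (n - k + 1)).norm R * (G.part (k + 1)).norm R) := by
    intro k _
    rw [Cn]
    ring
  rw [Finset.sum_congr rfl hcong, ← Finset.mul_sum]

end Aux5
section Aux6

open MvPolynomial Finset

variable {d : ℕ}

noncomputable def CC (D : ℕ) : ℝ := ∑ m ∈ Finset.range (2*D+1), Cn m

lemma Cn_le_CC {n D : ℕ} (hn : n ≤ 2*D) : Cn n ≤ CC D :=
  Finset.single_le_sum (fun m _ => Cn_nonneg m) (Finset.mem_range.2 (by omega))

lemma CC_pos (D : ℕ) : 0 < CC D := by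
  have h0 : Cn 0 ≤ CC D := Cn_le_CC (by omega)
  have : Cn 0 = 2 := by norm_num [Cn]
  linarith

lemma CC_nonneg (D : ℕ) : 0 ≤ CC D := (CC_pos D).le

lemma sum_sigma_le (P G : GPoly d) (s : Finset ℕ) (R : ℝ) (hR : 0 < R) :
    ∑ n ∈ s, ∑ k ∈ Finset.range (n+1), (P.part (n - k + 1)).norm R * (G.part (k + 1)).norm R
      ≤ P.norm R * G.norm R := by
  have hinj : ∀ x ∈ s.sigma (fun n => Finset.range (n+1)),
      ∀ y ∈ s.sigma (fun n => Finset.range (n+1)),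
      (fun z : Σ _ : ℕ, ℕ => (z.1 - z.2 + 1, z.2 + 1)) x
        = (fun z : Σ _ : ℕ, ℕ => (z.1 - z.2 + 1, z.2 + 1)) y → x = y := by
    rintro ⟨n, k⟩ hx ⟨n', k'⟩ hy hxy
    simp only [Finset.mem_sigma, Finset.mem_range] at hx hy
    simp only [Prod.mk.injEq] at hxy
    obtain ⟨h1, h2⟩ := hxy
    have : k = k' := by omega
    have : n = n' := by omega
    subst this
    subst ‹k = k'›
    rfl
  have himg := Finset.sum_image (s := s.sigma (fun n => Finset.range (n+1)))
    (g := fun z : Σ _ : ℕ, ℕ => (z.1 - z.2 + 1, z.2 + 1))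
    (f := fun y : ℕ × ℕ => (P.part y.1).norm R * (G.part y.2).norm R) hinj
  set I := (s.sigma (fun n => Finset.range (n+1))).image
    (fun z : Σ _ : ℕ, ℕ => (z.1 - z.2 + 1, z.2 + 1)) with hI
  have heq : ∑ n ∈ s, ∑ k ∈ Finset.range (n+1),
      (P.part (n - k + 1)).norm R * (G.part (k + 1)).norm R
      = ∑ y ∈ I, (P.part y.1).norm R * (G.part y.2).norm R := by
    rw [Finset.sum_sigma' s (fun n => Finset.range (n+1))
      (fun n k => (P.part (n - k + 1)).norm R * (G.part (k + 1)).norm R), hI,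
      Finset.sum_image hinj]
  rw [heq]
  have hsub : I ⊆ (I.image Prod.fst) ×ˢ (I.image Prod.snd) := by
    intro y hy
    rw [Finset.mem_product]
    exact ⟨Finset.mem_image_of_mem _ hy, Finset.mem_image_of_mem _ hy⟩
  refine le_trans (Finset.sum_le_sum_of_subset_of_nonneg hsub (fun y _ _ =>
    mul_nonneg (partNorm_nonneg _ hR.le) (partNorm_nonneg _ hR.le))) ?_
  rw [Finset.sum_product]
  change (∑ x ∈ I.image Prod.fst, ∑ y ∈ I.image Prod.snd,
      (P.part x).norm R * (G.part y).norm R) ≤ _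
  rw [← Finset.sum_mul_sum]
  apply mul_le_mul
  · exact Summable.sum_le_tsum _ (fun p _ => partNorm_nonneg _ hR.le) (summable_partNorm P R)
  · exact Summable.sum_le_tsum _ (fun q _ => partNorm_nonneg _ hR.le) (summable_partNorm G R)
  · exact Finset.sum_nonneg (fun q _ => partNorm_nonneg _ hR.le)
  · exact gnorm_nonneg P hR.le

lemma step_norm {Q P G : GPoly d} (hQ : IsBracket Q P G) {D : ℕ} (hP : DegLe P D)
    (hG : DegLe G D) (R : ℝ) (hR : 0 < R) :
    Q.norm R * R^2 ≤ CC D * P.norm R * G.norm R := by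
  rw [gnorm_eq Q R, Finset.sum_mul]
  have hper : ∀ n ∈ degSet Q, (Q.part n).norm R * R^2
      ≤ CC D * ∑ k ∈ Finset.range (n+1), (P.part (n - k + 1)).norm R * (G.part (k + 1)).norm R := by
    intro n _
    have hb := part_norm_bound hQ n R hR
    by_cases hn : n ≤ 2*D
    · refine hb.trans ?_
      apply mul_le_mul_of_nonneg_right (Cn_le_CC hn)
      exact Finset.sum_nonneg (fun k _ =>
        mul_nonneg (partNorm_nonneg _ hR.le) (partNorm_nonneg _ hR.le))
    · have hz : ∀ k ∈ Finset.range (n+1),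
          (P.part (n - k + 1)).norm R * (G.part (k + 1)).norm R = 0 := by
        intro k hk
        rw [Finset.mem_range] at hk
        by_cases hc : n - k + 1 ≤ D
        · have hcg : D < k + 1 := by omega
          rw [polyNorm_eq (G.part (k+1)), supC_zero _ (hG _ hcg), zero_mul, mul_zero]
        · rw [polyNorm_eq (P.part (n-k+1)), supC_zero _ (hP _ (by omega)), zero_mul, zero_mul]
      rw [Finset.sum_eq_zero hz] at hb ⊢
      rw [mul_zero] at hb ⊢
      exact hb
  refine (Finset.sum_le_sum hper).trans ?_
  rw [← Finset.mul_sum, mul_assoc]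
  exact mul_le_mul_of_nonneg_left (sum_sigma_le P G (degSet Q) R hR) (CC_nonneg D)

lemma step_deg {Q P G : GPoly d} (hQ : IsBracket Q P G) {D : ℕ} (hP : DegLe P D)
    (hG : DegLe G D) : DegLe Q (2*D) := by
  intro n hn Nv
  have hb := part_coeff_bound (P := P) (G := G) hQ n Nv
  have hz : ∀ x ∈ Finset.HasAntidiagonal.antidiagonal (ones n),
      2 * ((((wt x.1 : ℝ)) + 1) * (n:ℝ)^(wt x.1) * supC (P.part (wt x.1 + 1)))
        * ((((wt x.2 : ℝ)) + 1) * (n:ℝ)^(wt x.2) * supC (G.part (wt x.2 + 1))) = 0 := by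
    intro x hx
    have hw := antidiag_wt hx
    by_cases hc : wt x.1 + 1 ≤ D
    · rw [supC_zero _ (hG _ (by omega))]; ring
    · rw [supC_zero _ (hP _ (by omega))]; ring
  rw [Finset.sum_eq_zero hz] at hb
  have h0 := norm_nonneg ((Q.part n).coeff Nv)
  exact norm_eq_zero.1 (le_antisymm hb h0)

lemma degle_mono {P : GPoly d} {D D' : ℕ} (h : DegLe P D) (hDD : D ≤ D') : DegLe P D' :=
  fun r hr Jv => h r (by omega) Jv

end Aux6
/-- Corollary on the iterated adjoint action.
Let `G ∈ 𝒫_{r₁,r₂}`, `F ∈ 𝒫_{r₃,r₄}` with `3 ≤ r₁ ≤ r₂` and all degrees `≤ r̄`, and let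
`n̄` be the smallest integer with `(n̄+1)(r₁−2)+r₂ > r̄`.  Then there is `C = C_{r̄} > 0`
such that for every `k ≤ n̄` and every `R > 0`,
`‖(Ad_G)^k F‖_R ≤ (C ‖G‖_R / R²)^k ‖F‖_R`. -/
theorem stmt_7 (d : ℕ) (hd : 1 ≤ d) (rbar r₁ r₂ r₃ r₄ : ℕ)
    (h1 : 3 ≤ r₁) (h12 : r₁ ≤ r₂) (h2 : r₂ ≤ rbar) (h3 : r₃ ≤ rbar) (h4 : r₄ ≤ rbar)
    (nbar : ℕ) (hnbar : rbar < (nbar + 1) * (r₁ - 2) + r₂)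
    (hnbarLeast : ∀ m : ℕ, rbar < (m + 1) * (r₁ - 2) + r₂ → nbar ≤ m) :
    ∃ C : ℝ, 0 < C ∧ ∀ G F : GPoly d, G.InRange r₁ r₂ → F.InRange r₃ r₄ →
      ∀ A : ℕ → GPoly d, A 0 = F → (∀ k : ℕ, IsBracket (A (k + 1)) (A k) G) →
      ∀ k : ℕ, k ≤ nbar → ∀ R : ℝ, 0 < R →
        (A k).norm R ≤ (C * G.norm R / R ^ 2) ^ k * F.norm R := by
  have hnr : nbar ≤ rbar := by
    apply hnbarLeast rbar
    have h12' : 1 ≤ r₁ - 2 := by omega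
    have hmul := Nat.mul_le_mul_left (rbar+1) h12'
    omega
  refine ⟨CC (2^rbar * (2*rbar + 1)), CC_pos _, ?_⟩
  intro G F hGr hFr A hA0 hAB
  set E := r₄ + r₂ + 1 with hE
  set DD := 2^rbar * (2*rbar + 1) with hDD
  have hDDge : 2*rbar + 1 ≤ DD := Nat.le_mul_of_pos_left _ (by positivity)
  have hgd : DegLe G DD := by
    intro r hr Jv
    exact hGr r (Or.inr (by omega)) Jv
  have main : ∀ k, k ≤ nbar → DegLe (A k) (2^k * E) ∧
      ∀ R : ℝ, 0 < R → (A k).norm R ≤ (CC DD * GPoly.norm G R / R^2)^k * GPoly.norm F R := by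
    intro k
    induction k with
    | zero =>
        intro _
        constructor
        · intro r hr Jv
          rw [hA0]
          apply hFr r (Or.inr ?_) Jv
          have h1' : 2^0 * E = E := by norm_num
          omega
        · intro R hR
          rw [hA0]
          simp
    | succ k ih =>
        intro hk
        obtain ⟨ihdeg, ihnorm⟩ := ih (by omega)
        have hkE_le : 2^k * E ≤ DD := by
          have h1' : 2^k ≤ 2^rbar := Nat.pow_le_pow_right (by norm_num) (by omega)
          have h2' : E ≤ 2*rbar + 1 := by omega
          calc 2^k * E ≤ 2^rbar * (2*rbar+1) := Nat.mul_le_mul h1' h2'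
            _ = DD := rfl
        have hdegk : DegLe (A k) DD := degle_mono ihdeg hkE_le
        have hgE : DegLe G (2^k * E) := by
          intro r hr Jv
          apply hGr r (Or.inr ?_) Jv
          have h3' : E ≤ 2^k * E := Nat.le_mul_of_pos_left _ (by positivity)
          omega
        constructor
        · have hsd := step_deg (hAB k) ihdeg hgE
          intro r hr Jv
          apply hsd r ?_ Jv
          have h4' : 2^(k+1) * E = 2*(2^k*E) := by ring
          omega
        · intro R hR
          have hstep := step_norm (hAB k) hdegk hgd R hR
          have h2 : (A (k+1)).norm R ≤ CC DD * GPoly.norm G R / R^2 * (A k).norm R := by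
            rw [div_mul_eq_mul_div, le_div_iff₀ (by positivity : (0:ℝ) < R^2)]
            calc (A (k+1)).norm R * R^2 ≤ CC DD * (A k).norm R * GPoly.norm G R := hstep
              _ = CC DD * GPoly.norm G R * (A k).norm R := by ring
          refine h2.trans ?_
          have hnn : 0 ≤ CC DD * GPoly.norm G R / R^2 :=
            div_nonneg (mul_nonneg (CC_nonneg DD) (gnorm_nonneg G hR.le)) (by positivity)
          calc CC DD * GPoly.norm G R / R^2 * (A k).norm R
              ≤ CC DD * GPoly.norm G R / R^2 * ((CC DD * GPoly.norm G R / R^2)^k * GPoly.norm F R) :=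
                mul_le_mul_of_nonneg_left (ihnorm R hR) hnn
            _ = (CC DD * GPoly.norm G R / R^2)^(k+1) * GPoly.norm F R := by ring
  intro k hk R hR
  exact (main k hk).2 R hR

end AG
end

section
/- Assume the frequencies ω = (ω_j)_{j∈ℤ^d} satisfy Hypotheses (F.1), (F.2) and (F.3), and fix r ∈ ℕ with r ≥ 3. Then there exist τ'_r and γ'_r > 0 such that for every sufficiently large N, every p with 3 ≤ p ≤ r, and every non-resonant multi-index 𝐉 = (J₁,…,J_p) ∈ 𝓙_p^N, the implication holds: if Σ_{l=1}^{p} σ_l ω_{j_l} ≠ 0 then |Σ_{l=1}^{p} σ_l ω_{j_l}| ≥ γ'_r / N^{τ'_r}. -/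
open scoped BigOperators

namespace AG

noncomputable def Emap (d : ℕ) : Zd d →+ EuclideanSpace ℝ (Fin d) where
  toFun j := WithLp.toLp 2 (fun i => (j i : ℝ))
  map_zero' := by ext i; simp
  map_add' j k := by ext i; push_cast; simp [Pi.add_apply]

lemma enorm_eq_norm {d : ℕ} (j : Zd d) : enorm j = ‖Emap d j‖ := by
  rw [EuclideanSpace.norm_eq]
  unfold enorm
  congr 1
  apply Finset.sum_congr rfl
  intro i _
  rw [Real.norm_eq_abs, sq_abs]
  rfl

lemma enorm_nonneg' {d : ℕ} (j : Zd d) : 0 ≤ enorm j := Real.sqrt_nonneg _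

lemma enorm_zsmul {d : ℕ} (n : ℤ) (j : Zd d) : enorm (n • j) = |(n:ℝ)| * enorm j := by
  rw [enorm_eq_norm, map_zsmul, enorm_eq_norm, ← Int.cast_smul_eq_zsmul ℝ, norm_smul,
    Real.norm_eq_abs]

lemma abs_sgn (b : Bool) : |((sgn b : ℤ) : ℝ)| = 1 := by cases b <;> simp [sgn]

lemma enorm_neg {d : ℕ} (j : Zd d) : enorm (-j) = enorm j := by
  rw [enorm_eq_norm, map_neg, norm_neg, enorm_eq_norm]

lemma enorm_sum_le {d n : ℕ} (s : Finset (Fin n)) (g : Fin n → Zd d) (N : ℝ)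
    (h : ∀ l ∈ s, enorm (g l) ≤ N) : enorm (∑ l ∈ s, g l) ≤ s.card * N := by
  rw [enorm_eq_norm, map_sum]
  calc ‖∑ l ∈ s, Emap d (g l)‖ ≤ ∑ l ∈ s, ‖Emap d (g l)‖ := norm_sum_le _ _
  _ ≤ ∑ _l ∈ s, N := Finset.sum_le_sum (fun l hl => by rw [← enorm_eq_norm]; exact h l hl)
  _ = s.card * N := by rw [Finset.sum_const, nsmul_eq_mul]


set_option maxHeartbeats 1000000 in
/-- Lemma `nr.vera`.
Under Hypotheses (F.1), (F.2) and (F.3) (with partition `Ω`), for any `r ≥ 3` there are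
`τ'_r` and `γ'_r > 0` such that, for all sufficiently large `N`, for any `3 ≤ p ≤ r` and
any non-resonant multi-index `J ∈ 𝓙_p^N` with `Σ σ_l ω_{j_l} ≠ 0`, one has
`|Σ σ_l ω_{j_l}| ≥ γ'_r / N^{τ'_r}`. -/
theorem stmt_8 (d : ℕ) (hd : 1 ≤ d) (ω : Zd d → ℝ)
    -- (F.1)
    (β : ℝ) (hβ : 1 < β)
    (hF1 : ∃ C₁ : ℝ, 0 < C₁ ∧ ∃ M : ℝ, ∀ j : Zd d, M ≤ enorm j →
      enorm j ^ β / C₁ ≤ ω j ∧ ω j ≤ C₁ * enorm j ^ β)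
    -- (F.2)
    (hF2 : ∀ p : ℕ, 3 ≤ p → ∃ γ : ℝ, 0 < γ ∧ ∃ τ : ℝ, ∃ N₀ : ℝ, ∀ N : ℝ, N₀ ≤ N →
      ∀ Jv : Fin p → Idx d, (∀ l, inorm (Jv l) ≤ N) →
        freqSum ω Jv ≠ 0 → γ / N ^ τ ≤ |freqSum ω Jv|)
    -- the partition of (F.3)
    (ι : Type) (Ω : ι → Set (Zd d))
    (hpart : ∀ j : Zd d, ∃! α : ι, j ∈ Ω α)
    -- (F.3.1): each block is either near the origin or dyadic
    (hF31 : ∃ C₁ C₂ : ℝ, ∀ α : ι,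
      (∀ j ∈ Ω α, enorm j ≤ C₁) ∨ (∀ j ∈ Ω α, ∀ k ∈ Ω α, enorm j ≤ C₂ * enorm k))
    -- (F.3.2): separation of distinct blocks
    (hF32 : ∃ δ : ℝ, 0 < δ ∧ ∃ C₃ : ℝ, 0 < C₃ ∧ ∀ α α' : ι, α ≠ α' →
      ∀ i ∈ Ω α, ∀ j ∈ Ω α',
        C₃ * (enorm i ^ δ + enorm j ^ δ) ≤ enorm (i - j) + |ω i - ω j|)
    (r : ℕ) (hr : 3 ≤ r) :
    ∃ τ' : ℝ, ∃ γ' : ℝ, 0 < γ' ∧ ∃ N₀ : ℝ, ∀ N : ℝ, N₀ ≤ N →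
      ∀ p : ℕ, 3 ≤ p → p ≤ r → ∀ Jv : Fin p → Idx d,
        momentum Jv = 0 →
        -- (I.1): at most two indexes larger than N
        (∀ a b c : Fin p, N < inorm (Jv a) → N < inorm (Jv b) → N < inorm (Jv c) →
          a = b ∨ a = c ∨ b = c) →
        -- (I.2): two large indexes lying in the same cluster carry the same sign
        (∀ a b : Fin p, a ≠ b → N < inorm (Jv a) → N < inorm (Jv b) →
          ∀ α : ι, (Jv a).1 ∈ Ω α → (Jv b).1 ∈ Ω α → (Jv a).2 = (Jv b).2) →
        freqSum ω Jv ≠ 0 → γ' / N ^ τ' ≤ |freqSum ω Jv| := by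
  classical
  obtain ⟨C₁, hC₁, M, hF1⟩ := hF1
  obtain ⟨δ, hδ, C₃, hC₃, hsep⟩ := hF32
  clear hF31 hd
  choose γf hγf τf Nf hFb using hF2
  have hβ0 : (0:ℝ) < β := by linarith
  -- bound for ω near the origin
  obtain ⟨A, hA0, hAb⟩ : ∃ A : ℝ, 0 ≤ A ∧ ∀ j : Zd d, enorm j ≤ M → |ω j| ≤ A := by
    have hfin : {j : Zd d | enorm j ≤ M}.Finite := by
      apply Set.Finite.subset (Set.Finite.pi (fun _ : Fin d => Set.finite_Icc (-⌈M⌉) ⌈M⌉))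
      intro j hj
      simp only [Set.mem_pi, Set.mem_univ, Set.mem_Icc, forall_true_left]
      intro i
      have h1 : |(j i : ℝ)| ≤ M := by
        have h2 : ((j i:ℝ))^2 ≤ ∑ i', ((j i':ℝ))^2 :=
          Finset.single_le_sum (f := fun i' => ((j i':ℝ))^2) (fun _ _ => sq_nonneg _)
            (Finset.mem_univ i)
        calc |(j i:ℝ)| = Real.sqrt (((j i:ℝ))^2) := (Real.sqrt_sq_eq_abs _).symm
        _ ≤ enorm j := Real.sqrt_le_sqrt h2
        _ ≤ M := hj
      have hc := Int.le_ceil M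
      obtain ⟨hl, hr'⟩ := abs_le.mp h1
      constructor
      · exact_mod_cast le_trans (by linarith : -(⌈M⌉:ℝ) ≤ (j i:ℝ)) (le_refl _)
      · exact_mod_cast le_trans hr' hc
    obtain ⟨A₀, hA₀⟩ := (hfin.image (fun j => |ω j|)).bddAbove
    exact ⟨max A₀ 0, le_max_right _ _, fun j hj =>
      le_trans (hA₀ (Set.mem_image_of_mem _ hj)) (le_max_left _ _)⟩
  set e : ℝ := max 1 (β/δ) with he
  have he1 : 1 ≤ e := le_max_left _ _
  have hr0 : (0:ℝ) ≤ (r:ℝ) := Nat.cast_nonneg r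
  set Kb : ℝ := C₁ * ((r:ℝ)*(A+C₁)+1) + 1 with hKbdef
  have hKb1 : 1 ≤ Kb := by
    have h0 : 0 ≤ C₁ * ((r:ℝ)*(A+C₁)+1) := by positivity
    rw [hKbdef]; linarith
  set K : ℝ := Kb ^ (1/β) with hKdef
  have hK1 : 1 ≤ K := Real.one_le_rpow hKb1 (by positivity)
  have hKβ : K ^ β = Kb := by
    rw [hKdef, ← Real.rpow_mul (by linarith), one_div_mul_cancel (ne_of_gt hβ0), Real.rpow_one]
  set D : ℝ := (r:ℝ) + 1 + (r:ℝ)*A + (r:ℝ)*C₁ with hDdef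
  have hD0 : 0 < D := by
    have h0 : 0 ≤ (r:ℝ)*A := by positivity
    have h1 : 0 ≤ (r:ℝ)*C₁ := by positivity
    rw [hDdef]; linarith
  set Kd : ℝ := max 1 ((D/C₃) ^ (1/δ)) with hKddef
  set c : ℝ := max (max (r:ℝ) K) Kd with hcdef
  have hc1 : 1 ≤ c := le_trans hK1 (le_trans (le_max_right _ _) (le_max_left _ _))
  have hc0 : 0 < c := lt_of_lt_of_le one_pos hc1
  have hcr : (r:ℝ) ≤ c := le_trans (le_max_left _ _) (le_max_left _ _)
  have hcK : K ≤ c := le_trans (le_max_right _ _) (le_max_left _ _)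
  have hcKd : Kd ≤ c := le_max_right _ _
  have hmem3 : (3:ℕ) ∈ Finset.Icc 3 r := Finset.mem_Icc.mpr ⟨le_refl 3, hr⟩
  have hne : (Finset.Icc 3 r).Nonempty := ⟨3, hmem3⟩
  set τp : ℕ → ℝ := fun q => if h : 3 ≤ q then |τf q h| else 0 with hτpdef
  set γp : ℕ → ℝ := fun q => if h : 3 ≤ q then γf q h else 1 with hγpdef
  set Np : ℕ → ℝ := fun q => if h : 3 ≤ q then Nf q h else 0 with hNpdef
  set T : ℝ := (Finset.Icc 3 r).sup' hne τp with hTdef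
  have hT0 : 0 ≤ T := by
    refine le_trans ?_ (Finset.le_sup' τp hmem3)
    simp only [hτpdef, dif_pos (le_refl 3)]
    exact abs_nonneg _
  set γmin : ℝ := (Finset.Icc 3 r).inf' hne γp with hγmindef
  have hγmin0 : 0 < γmin := by
    rw [hγmindef, Finset.lt_inf'_iff]
    intro b hb
    simp only [hγpdef]
    split
    · exact hγf b ‹_›
    · exact one_pos
  have hcT : (0:ℝ) < c ^ T := Real.rpow_pos_of_pos hc0 T
  refine ⟨e * T, min 1 (γmin / c ^ T), lt_min one_pos (div_pos hγmin0 hcT),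
    max (max 1 M) ((Finset.Icc 3 r).sup' hne Np), ?_⟩
  intro N hN p hp3 hpr Jv hmom hI1 hI2 hne0
  have hN1 : 1 ≤ N := le_trans (le_trans (le_max_left 1 M) (le_max_left _ _)) hN
  have hN0 : 0 < N := lt_of_lt_of_le one_pos hN1
  have hMN : M ≤ N := le_trans (le_trans (le_max_right 1 M) (le_max_left _ _)) hN
  have hNe : N ≤ N ^ e := by
    calc N = N ^ (1:ℝ) := (Real.rpow_one N).symm
    _ ≤ N ^ e := Real.rpow_le_rpow_of_exponent_le hN1 he1
  have hNe0 : (0:ℝ) < N ^ e := Real.rpow_pos_of_pos hN0 e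
  have hNcNe : N ≤ c * N ^ e := le_trans hNe (le_mul_of_one_le_left hNe0.le hc1)
  have htriv : min 1 (γmin / c ^ T) / N ^ (e * T) ≤ 1 := by
    apply div_le_one_of_le₀
    · exact le_trans (min_le_left _ _) (Real.one_le_rpow hN1 (by positivity))
    · positivity
  by_cases hbig : 1 ≤ |freqSum ω Jv|
  · exact le_trans htriv hbig
  push_neg at hbig
  have hNβ1 : 1 ≤ N ^ β := Real.one_le_rpow hN1 hβ0.le
  have hNNβ : N ≤ N ^ β := by
    calc N = N ^ (1:ℝ) := (Real.rpow_one N).symm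
    _ ≤ N ^ β := Real.rpow_le_rpow_of_exponent_le hN1 hβ.le
  have Wsmall : ∀ j : Zd d, enorm j ≤ N → |ω j| ≤ A + C₁ * N ^ β := by
    intro j hj
    by_cases hjM : enorm j ≤ M
    · have h1 := hAb j hjM
      have h2 : 0 ≤ C₁ * N ^ β := by positivity
      linarith
    · push_neg at hjM
      obtain ⟨h1, h2⟩ := hF1 j hjM.le
      have hω0 : 0 ≤ ω j :=
        le_trans (div_nonneg (Real.rpow_nonneg (enorm_nonneg' j) β) hC₁.le) h1
      rw [abs_of_nonneg hω0]
      have h3 : enorm j ^ β ≤ N ^ β := Real.rpow_le_rpow (enorm_nonneg' j) hj hβ0.le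
      have h4 : C₁ * enorm j ^ β ≤ C₁ * N ^ β := mul_le_mul_of_nonneg_left h3 hC₁.le
      linarith
  set f : Fin p → ℝ := fun l => ((sgn ((Jv l).2) : ℤ) : ℝ) * ω ((Jv l).1) with hfdef
  have hfs : freqSum ω Jv = ∑ l, f l := rfl
  set g : Fin p → Zd d := fun l => sgn ((Jv l).2) • ((Jv l).1) with hgdef
  have hmom' : ∑ l, g l = 0 := hmom
  have hgnorm : ∀ l, enorm (g l) = enorm ((Jv l).1) := by
    intro l
    rw [hgdef]
    simp only []
    rw [enorm_zsmul, abs_sgn, one_mul]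
  have habsf : ∀ l, |f l| = |ω ((Jv l).1)| := by
    intro l
    rw [hfdef]
    simp only []
    rw [abs_mul, abs_sgn, one_mul]
  -- main claim: all indices are ≤ c * N ^ e
  have hall : ∀ l, inorm (Jv l) ≤ c * N ^ e := by
    intro a
    by_cases haN : inorm (Jv a) ≤ N
    · exact le_trans haN hNcNe
    push_neg at haN
    by_cases hb2 : ∃ b, b ≠ a ∧ N < inorm (Jv b)
    · -- two large indices
      obtain ⟨b, hba, hbN⟩ := hb2
      have hsmall : ∀ m, m ≠ a → m ≠ b → inorm (Jv m) ≤ N := by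
        intro m hma hmb
        by_contra h
        push_neg at h
        rcases hI1 a b m haN hbN h with h' | h' | h'
        · exact hba h'.symm
        · exact hma h'.symm
        · exact hmb h'.symm
      set s2 : Finset (Fin p) := (Finset.univ.erase a).erase b with hs2def
      have hbmem : b ∈ Finset.univ.erase a := Finset.mem_erase.mpr ⟨hba, Finset.mem_univ b⟩
      have hcard : ((s2.card : ℝ)) ≤ (r:ℝ) := by
        have h1 : s2.card ≤ p := le_trans (Finset.card_erase_le) (le_trans (Finset.card_erase_le) (by simp))
        exact_mod_cast le_trans h1 hpr
      have hs2mem : ∀ l ∈ s2, l ≠ a ∧ l ≠ b := by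
        intro l hl
        obtain ⟨h1, h2⟩ := Finset.mem_erase.mp hl
        exact ⟨(Finset.mem_erase.mp h2).1, h1⟩
      have hfs2 : freqSum ω Jv = f a + f b + ∑ l ∈ s2, f l := by
        rw [hfs, ← Finset.add_sum_erase Finset.univ f (Finset.mem_univ a),
          ← Finset.add_sum_erase (Finset.univ.erase a) f hbmem]
        ring
      have hgab0 : g a + g b = -∑ l ∈ s2, g l := by
        apply eq_neg_of_add_eq_zero_left
        rw [add_assoc, Finset.add_sum_erase (Finset.univ.erase a) g hbmem,
          Finset.add_sum_erase Finset.univ g (Finset.mem_univ a)]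
        exact hmom'
      have hrestE : enorm (g a + g b) ≤ (r:ℝ) * N := by
        rw [hgab0, enorm_neg]
        calc enorm (∑ l ∈ s2, g l) ≤ s2.card * N := by
              apply enorm_sum_le
              intro l hl
              rw [hgnorm l]
              exact hsmall l (hs2mem l hl).1 (hs2mem l hl).2
        _ ≤ (r:ℝ) * N := mul_le_mul_of_nonneg_right hcard hN0.le
      have hR : |∑ l ∈ s2, f l| ≤ (r:ℝ) * (A + C₁ * N ^ β) := by
        calc |∑ l ∈ s2, f l| ≤ ∑ l ∈ s2, |f l| := Finset.abs_sum_le_sum_abs _ _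
        _ ≤ ∑ _l ∈ s2, (A + C₁ * N ^ β) := by
            apply Finset.sum_le_sum
            intro l hl
            rw [habsf l]
            exact Wsmall _ (hsmall l (hs2mem l hl).1 (hs2mem l hl).2)
        _ = s2.card * (A + C₁ * N ^ β) := by rw [Finset.sum_const, nsmul_eq_mul]
        _ ≤ (r:ℝ) * (A + C₁ * N ^ β) := by
            apply mul_le_mul_of_nonneg_right hcard
            positivity
      obtain ⟨hωa1, hωa2⟩ := hF1 _ (le_trans hMN haN.le)
      obtain ⟨hωb1, hωb2⟩ := hF1 _ (le_trans hMN hbN.le)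
      have hωa0 : 0 ≤ ω ((Jv a).1) :=
        le_trans (div_nonneg (Real.rpow_nonneg (enorm_nonneg' _) β) hC₁.le) hωa1
      have hωb0 : 0 ≤ ω ((Jv b).1) :=
        le_trans (div_nonneg (Real.rpow_nonneg (enorm_nonneg' _) β) hC₁.le) hωb1
      by_cases hσ : (Jv a).2 = (Jv b).2
      · -- same sign: show the index can't exceed c N^e
        by_contra hcon
        push_neg at hcon
        have hKa : K * N ≤ enorm ((Jv a).1) := by
          calc K * N ≤ K * N ^ e := mul_le_mul_of_nonneg_left hNe (by linarith)
          _ ≤ c * N ^ e := mul_le_mul_of_nonneg_right hcK hNe0.le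
          _ ≤ enorm ((Jv a).1) := hcon.le
        have hωabig : ((r:ℝ)*(A+C₁)+1) * N ^ β ≤ ω ((Jv a).1) := by
          have h1 : (K*N) ^ β ≤ enorm ((Jv a).1) ^ β :=
            Real.rpow_le_rpow (by positivity) hKa hβ0.le
          have h2 : (K*N) ^ β = Kb * N ^ β := by
            rw [Real.mul_rpow (by linarith : (0:ℝ) ≤ K) hN0.le, hKβ]
          have h5 : Kb * N ^ β ≤ enorm ((Jv a).1) ^ β := h2 ▸ h1
          have hNβ0 : (0:ℝ) ≤ N ^ β := by positivity
          have hX : ((r:ℝ)*(A+C₁)+1) * N ^ β ≤ Kb * N ^ β / C₁ := by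
            rw [le_div_iff₀ hC₁]
            have hKbX : C₁ * ((r:ℝ)*(A+C₁)+1) ≤ Kb := by rw [hKbdef]; linarith
            linarith [mul_le_mul_of_nonneg_right hKbX hNβ0]
          calc ((r:ℝ)*(A+C₁)+1) * N ^ β ≤ Kb * N ^ β / C₁ := hX
          _ ≤ enorm ((Jv a).1) ^ β / C₁ := (div_le_div_iff_of_pos_right hC₁).mpr h5
          _ ≤ ω ((Jv a).1) := hωa1
        -- derive 1 ≤ |freqSum|, contradiction
        have hfab : f a + f b = ((sgn ((Jv a).2) : ℤ) : ℝ) * (ω ((Jv a).1) + ω ((Jv b).1)) := by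
          rw [hfdef]
          simp only []
          rw [hσ]
          ring
        have habs2 : |f a + f b| = ω ((Jv a).1) + ω ((Jv b).1) := by
          rw [hfab, abs_mul, abs_sgn, one_mul, abs_of_nonneg (by linarith)]
        have hlow : ω ((Jv a).1) + ω ((Jv b).1) - |∑ l ∈ s2, f l| ≤ |freqSum ω Jv| := by
          have h1 : |f a + f b| ≤ |freqSum ω Jv| + |∑ l ∈ s2, f l| := by
            have h2 : f a + f b = freqSum ω Jv - ∑ l ∈ s2, f l := by rw [hfs2]; ring
            rw [h2]
            exact abs_sub _ _
          linarith [habs2 ▸ h1]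
        have hfin1 : (1:ℝ) ≤ |freqSum ω Jv| := by
          have h1 : ((r:ℝ)*A) * 1 ≤ ((r:ℝ)*A) * N ^ β :=
            mul_le_mul_of_nonneg_left hNβ1 (by positivity)
          have h2 := hR
          linarith [hlow, hωabig, hωb0, hNβ1]
        linarith
      · -- different signs: different clusters, use separation
        obtain ⟨α, hαa, -⟩ := hpart (Jv a).1
        obtain ⟨α', hαb, -⟩ := hpart (Jv b).1
        have hαne : α ≠ α' := by
          intro h
          subst h
          exact hσ (hI2 a b (Ne.symm hba) haN hbN α hαa hαb)
        have hsep' := hsep α α' hαne _ hαa _ hαb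
        have hsg : (sgn ((Jv b).2) : ℤ) = -(sgn ((Jv a).2)) := by
          revert hσ
          cases (Jv a).2 <;> cases (Jv b).2 <;> simp [sgn]
        have hgab : g a + g b = sgn ((Jv a).2) • ((Jv a).1 - (Jv b).1) := by
          rw [hgdef]
          simp only []
          rw [hsg, smul_sub, neg_smul, sub_eq_add_neg]
        have hjab : enorm ((Jv a).1 - (Jv b).1) ≤ (r:ℝ) * N := by
          have h1 : enorm (g a + g b) = enorm ((Jv a).1 - (Jv b).1) := by
            rw [hgab, enorm_zsmul, abs_sgn, one_mul]
          rw [← h1]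
          exact hrestE
        have hfab : f a + f b =
            ((sgn ((Jv a).2) : ℤ) : ℝ) * (ω ((Jv a).1) - ω ((Jv b).1)) := by
          rw [hfdef]
          simp only []
          rw [hsg]
          push_cast
          ring
        have hωab : |ω ((Jv a).1) - ω ((Jv b).1)| < 1 + (r:ℝ) * (A + C₁ * N ^ β) := by
          have h1 : |f a + f b| ≤ |freqSum ω Jv| + |∑ l ∈ s2, f l| := by
            have h2 : f a + f b = freqSum ω Jv - ∑ l ∈ s2, f l := by rw [hfs2]; ring
            rw [h2]
            exact abs_sub _ _
          have h3 : |f a + f b| = |ω ((Jv a).1) - ω ((Jv b).1)| := by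
            rw [hfab, abs_mul, abs_sgn, one_mul]
          rw [h3] at h1
          linarith [hR, hbig]
        have hea : enorm ((Jv a).1) ^ δ ≤ (D/C₃) * N ^ β := by
          have h0 : 0 ≤ enorm ((Jv b).1) ^ δ := Real.rpow_nonneg (enorm_nonneg' _) δ
          have h1 : C₃ * (enorm ((Jv a).1) ^ δ) ≤
              enorm ((Jv a).1 - (Jv b).1) + |ω ((Jv a).1) - ω ((Jv b).1)| := by
            have h00 := mul_nonneg hC₃.le h0
            have h01 : C₃ * (enorm ((Jv a).1) ^ δ + enorm ((Jv b).1) ^ δ)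
                = C₃ * enorm ((Jv a).1) ^ δ + C₃ * enorm ((Jv b).1) ^ δ := by ring
            linarith [hsep']
          have h2 : C₃ * (enorm ((Jv a).1) ^ δ) ≤ D * N ^ β := by
            have h3 : (r:ℝ)*N + (1 + (r:ℝ)*(A + C₁*N^β)) ≤ D * N ^ β := by
              rw [hDdef]
              have h4 : (r:ℝ)*N ≤ (r:ℝ)*N^β := mul_le_mul_of_nonneg_left hNNβ hr0
              have h5 : (r:ℝ)*A*1 ≤ (r:ℝ)*A*N^β :=
                mul_le_mul_of_nonneg_left hNβ1 (by positivity)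
              linarith [h4, h5, hNβ1]
            linarith [hjab, hωab]
          rw [div_mul_eq_mul_div, le_div_iff₀ hC₃]
          linarith [h2]
        have hfin : enorm ((Jv a).1) ≤ Kd * N ^ (β/δ) := by
          have h1 : enorm ((Jv a).1) = (enorm ((Jv a).1) ^ δ) ^ (1/δ) := by
            rw [← Real.rpow_mul (enorm_nonneg' _), mul_one_div, div_self hδ.ne',
              Real.rpow_one]
          rw [h1]
          have hDC0 : (0:ℝ) ≤ D/C₃ := le_of_lt (div_pos hD0 hC₃)
          calc (enorm ((Jv a).1) ^ δ) ^ (1/δ) ≤ ((D/C₃) * N ^ β) ^ (1/δ) :=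
                Real.rpow_le_rpow (Real.rpow_nonneg (enorm_nonneg' _) δ) hea (by positivity)
          _ = (D/C₃) ^ (1/δ) * (N ^ β) ^ (1/δ) :=
                Real.mul_rpow hDC0 (Real.rpow_nonneg hN0.le β)
          _ = (D/C₃) ^ (1/δ) * N ^ (β/δ) := by
                rw [← Real.rpow_mul hN0.le, mul_one_div]
          _ ≤ Kd * N ^ (β/δ) := by
                apply mul_le_mul_of_nonneg_right (le_max_right _ _)
                exact Real.rpow_nonneg hN0.le _
        calc inorm (Jv a) ≤ Kd * N ^ (β/δ) := hfin
        _ ≤ c * N ^ e := by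
            apply mul_le_mul hcKd
              (Real.rpow_le_rpow_of_exponent_le hN1 (le_max_right 1 (β/δ)))
              (Real.rpow_nonneg hN0.le _) hc0.le
    · -- only one large index
      push_neg at hb2
      have hga : g a = -∑ l ∈ Finset.univ.erase a, g l := by
        apply eq_neg_of_add_eq_zero_left
        rw [Finset.add_sum_erase Finset.univ g (Finset.mem_univ a)]
        exact hmom'
      have h1 : enorm ((Jv a).1) ≤ (r:ℝ) * N := by
        rw [← hgnorm a, hga, enorm_neg]
        calc enorm (∑ l ∈ Finset.univ.erase a, g l) ≤ (Finset.univ.erase a).card * N := by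
              apply enorm_sum_le
              intro l hl
              rw [hgnorm l]
              exact hb2 l (Finset.ne_of_mem_erase hl)
        _ ≤ (r:ℝ) * N := by
              apply mul_le_mul_of_nonneg_right _ hN0.le
              have h2 : (Finset.univ.erase a).card ≤ p :=
                le_trans (Finset.card_erase_le) (by simp)
              exact_mod_cast le_trans h2 hpr
      calc inorm (Jv a) ≤ (r:ℝ) * N := h1
      _ ≤ c * N ^ e := mul_le_mul hcr hNe hN0.le hc0.le
  -- apply (F.2) with N* = c * N ^ e
  have hp3r : p ∈ Finset.Icc 3 r := Finset.mem_Icc.mpr ⟨hp3, hpr⟩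
  have hNstar : Nf p hp3 ≤ c * N ^ e := by
    have h1 : Np p ≤ (Finset.Icc 3 r).sup' hne Np := Finset.le_sup' Np hp3r
    have h2 : Np p = Nf p hp3 := dif_pos hp3
    have h3 : (Finset.Icc 3 r).sup' hne Np ≤ N := le_trans (le_max_right _ _) hN
    calc Nf p hp3 ≤ N := by rw [← h2]; exact le_trans h1 h3
    _ ≤ c * N ^ e := hNcNe
  have hFb' := hFb p hp3 (c * N ^ e) hNstar Jv hall hne0
  refine le_trans ?_ hFb'
  have hτpp : τp p = |τf p hp3| := dif_pos hp3
  have hτT : τp p ≤ T := Finset.le_sup' τp hp3r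
  have hx1 : 1 ≤ c * N ^ e := le_trans hN1 hNcNe
  have hden : (c * N ^ e) ^ (τf p hp3) ≤ c ^ T * N ^ (e * T) := by
    have h1 : (c * N ^ e) ^ (τf p hp3) ≤ (c * N ^ e) ^ (τp p) := by
      apply Real.rpow_le_rpow_of_exponent_le hx1
      rw [hτpp]
      exact le_abs_self _
    have h2 : (c * N ^ e) ^ (τp p) = c ^ (τp p) * (N ^ e) ^ (τp p) :=
      Real.mul_rpow hc0.le hNe0.le
    have h3 : c ^ (τp p) ≤ c ^ T := Real.rpow_le_rpow_of_exponent_le hc1 hτT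
    have h4 : (N ^ e) ^ (τp p) = N ^ (e * τp p) := by rw [← Real.rpow_mul hN0.le]
    have h5 : N ^ (e * τp p) ≤ N ^ (e * T) := by
      apply Real.rpow_le_rpow_of_exponent_le hN1
      apply mul_le_mul_of_nonneg_left hτT (by linarith)
    calc (c * N ^ e) ^ (τf p hp3) ≤ (c * N ^ e) ^ (τp p) := h1
    _ = c ^ (τp p) * (N ^ e) ^ (τp p) := h2
    _ ≤ c ^ T * N ^ (e * T) := by
        rw [h4]
        have h6 : (0:ℝ) ≤ N ^ (e * τp p) := Real.rpow_nonneg hN0.le _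
        have h7 : (0:ℝ) ≤ c ^ T := hcT.le
        calc c ^ (τp p) * N ^ (e * τp p) ≤ c ^ T * N ^ (e * τp p) :=
              mul_le_mul_of_nonneg_right h3 h6
        _ ≤ c ^ T * N ^ (e * T) := mul_le_mul_of_nonneg_left h5 h7
  have hγle : γmin ≤ γf p hp3 := by
    have h1 : γmin ≤ γp p := Finset.inf'_le γp hp3r
    have h2 : γp p = γf p hp3 := dif_pos hp3
    rwa [h2] at h1
  have hNeT0 : (0:ℝ) < N ^ (e * T) := Real.rpow_pos_of_pos hN0 _
  have hγfpos := hγf p hp3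
  calc min 1 (γmin / c ^ T) / N ^ (e * T) ≤ (γf p hp3 / c ^ T) / N ^ (e * T) := by
        exact div_le_div_of_nonneg_right
          (le_trans (min_le_right _ _) ((div_le_div_iff_of_pos_right hcT).mpr hγle)) hNeT0.le
  _ = γf p hp3 / (c ^ T * N ^ (e * T)) := by rw [div_div]
  _ ≤ γf p hp3 / ((c * N ^ e) ^ (τf p hp3)) := by
        exact div_le_div_of_nonneg_left hγfpos.le
          (Real.rpow_pos_of_pos (by positivity) _) hden


end AG
end

section
/- Let d ≥ 1, n := d(d+1)/2, τ* := n+1, and let ḡ be an admissible metric with diophantine constant γ > 0, i.e. a symmetric positive-definite bilinear form on ℝ^d satisfying |Σ_{i≤j} ḡ_{ij} ℓ_{ij}| ≥ γ·(Σ_{i≤j}|ℓ_{ij}|)^{−τ*} for every nonzero integer vector ℓ ∈ ℤ^n. Fix 0 < ζ₁ < ζ₂ and ζ ∈ (ζ₁,ζ₂), and define Ω_j(ζ) := |j|_ḡ · √(|j|_ḡ² + ζ) for j ∈ ℤ^d ∖ {0}. For K ≤ N, let j₁, …, j_K ∈ ℤ^d ∖ {0} with |j_i| ≤ N for all i and |j₁|_ḡ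 < |j₂|_ḡ < ⋯ < |j_K|_ḡ, and let D be the determinant of the K×K matrix whose (n,i) entry (n = 0,…,K−1; i = 1,…,K) is the n-th derivative ∂_ζ^n Ω_{j_i}(ζ). Then there exist constants C > 0 (depending on K, d, γ, τ*, ζ₁, ζ₂) and η > 0 depending only on d such that |D| ≥ C / N^{η K²}. -/
open scoped BigOperators

namespace AG

/-- `|j|_g² = g(j,j)` for a quadratic form with coefficients `g`. -/
noncomputable def qform (d : ℕ) (g : Fin d → Fin d → ℝ) (j : Zd d) : ℝ :=
  ∑ i, ∑ k, g i k * (j i : ℝ) * (j k : ℝ)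

/-- `τ* = d(d+1)/2 + 1`. -/
def tauStar (d : ℕ) : ℕ := d * (d + 1) / 2 + 1

/-- `g` is an admissible (γ-diophantine) metric:
`|Σ_{i≤j} g_{ij} ℓ_{ij}| ≥ γ (Σ_{i≤j}|ℓ_{ij}|)^{−τ*}` for all nonzero `ℓ ∈ ℤ^{d(d+1)/2}`. -/
def Diophantine (d : ℕ) (g : Fin d → Fin d → ℝ) (γ : ℝ) : Prop :=
  ∀ ℓ : Fin d → Fin d → ℤ, (∃ i j, i ≤ j ∧ ℓ i j ≠ 0) →
    γ / (∑ i, ∑ j, if i ≤ j then (|ℓ i j| : ℝ) else 0) ^ tauStar d ≤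
      |∑ i, ∑ j, if i ≤ j then g i j * (ℓ i j : ℝ) else 0|

/-- The (rescaled) QHD frequencies `Ω_j(ζ) = |j|_ḡ √(|j|_ḡ² + ζ)`. -/
noncomputable def qhdFreq (d : ℕ) (gbar : Fin d → Fin d → ℝ) (j : Zd d) (ζ : ℝ) : ℝ :=
  Real.sqrt (qform d gbar j) * Real.sqrt (qform d gbar j + ζ)

/-! ### Auxiliary lemmas -/

lemma aux_iteratedDeriv_sqrt_mul (x : ℝ) :
    ∀ n : ℕ, ∀ z : ℝ, 0 < x + z →
      iteratedDeriv n (fun t => Real.sqrt x * Real.sqrt (x + t)) z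
        = (∏ r ∈ Finset.range n, ((1:ℝ)/2 - r)) * Real.sqrt x * (x + z) ^ ((1:ℝ)/2 - n) := by
  intro n
  induction n with
  | zero => intro z hz; simp [iteratedDeriv_zero, Real.sqrt_eq_rpow]
  | succ n ih =>
    intro z hz
    rw [iteratedDeriv_succ]
    have hopen : IsOpen {t : ℝ | 0 < x + t} := isOpen_lt continuous_const (by continuity)
    have hev : iteratedDeriv n (fun t => Real.sqrt x * Real.sqrt (x + t))
        =ᶠ[nhds z] fun t => (∏ r ∈ Finset.range n, ((1:ℝ)/2 - r)) * Real.sqrt x * (x + t) ^ ((1:ℝ)/2 - n) := by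
      filter_upwards [hopen.mem_nhds hz] with t ht using ih t ht
    rw [hev.deriv_eq]
    have h1 : HasDerivAt (fun t : ℝ => x + t) 1 z := by
      simpa using (hasDerivAt_id z).const_add x
    have h2 : HasDerivAt (fun t : ℝ => (x + t) ^ ((1:ℝ)/2 - n))
        (1 * ((1:ℝ)/2 - n) * (x + z) ^ ((1:ℝ)/2 - n - 1)) z :=
      h1.rpow_const (Or.inl hz.ne')
    have h3 := h2.const_mul ((∏ r ∈ Finset.range n, ((1:ℝ)/2 - r)) * Real.sqrt x)
    rw [h3.deriv, Finset.prod_range_succ]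
    have he : (1:ℝ)/2 - n - 1 = 1/2 - (n + 1 : ℕ) := by push_cast; ring
    rw [he]
    ring

lemma aux_sym_sum {d : ℕ} (t : Fin d → Fin d → ℝ) (hsym : ∀ a b, t a b = t b a) :
    ∑ a, ∑ b, t a b
      = ∑ a, ∑ b, if a ≤ b then (if a = b then t a b else 2 * t a b) else 0 := by
  have h1 : ∑ a, ∑ b, t a b
      = ∑ a : Fin d, ∑ b : Fin d, ((if a < b then t a b else 0) + ((if a = b then t a b else 0) + (if b < a then t a b else 0))) := by
    refine Finset.sum_congr rfl fun a _ => Finset.sum_congr rfl fun b _ => ?_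
    rcases lt_trichotomy a b with h|h|h
    · simp [h, h.ne, h.ne', not_lt_of_gt h]
    · simp [h, lt_irrefl]
    · simp [h, h.ne, h.ne', not_lt_of_gt h]
  have h2 : ∑ a : Fin d, ∑ b : Fin d, (if a ≤ b then (if a = b then t a b else 2 * t a b) else 0)
      = ∑ a : Fin d, ∑ b : Fin d, (((if a < b then t a b else 0) + (if a < b then t a b else 0)) + (if a = b then t a b else 0)) := by
    refine Finset.sum_congr rfl fun a _ => Finset.sum_congr rfl fun b _ => ?_
    rcases lt_trichotomy a b with h|h|h
    · simp [h, h.le, h.ne, h.ne']; ring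
    · simp [h, lt_irrefl]
    · simp [h.ne, h.ne', not_lt_of_gt h, not_le_of_gt h]
  have h3 : ∑ a : Fin d, ∑ b : Fin d, (if (b:Fin d) < a then t a b else 0)
      = ∑ a : Fin d, ∑ b : Fin d, (if (a:Fin d) < b then t a b else 0) := by
    rw [Finset.sum_comm]
    refine Finset.sum_congr rfl fun a _ => Finset.sum_congr rfl fun b _ => ?_
    rcases lt_or_ge a b with h|h
    · simp [h, hsym a b]
    · simp [not_lt_of_ge h]
  rw [h1, h2]
  simp only [Finset.sum_add_distrib]
  rw [h3]
  ring

lemma aux_qform_repr {d : ℕ} (g : Fin d → Fin d → ℝ) (hsym : ∀ a b, g a b = g b a) (y : Zd d) :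
    qform d g y = ∑ a, ∑ b, if a ≤ b then
      g a b * (((if a = b then 1 else 2) * (y a * y b) : ℤ) : ℝ) else 0 := by
  have := aux_sym_sum (fun a b => g a b * (y a : ℝ) * (y b : ℝ))
    (fun a b => by beta_reduce; rw [hsym a b]; ring)
  rw [qform, this]
  refine Finset.sum_congr rfl fun a _ => Finset.sum_congr rfl fun b _ => ?_
  by_cases hab : a ≤ b
  · by_cases h : a = b <;> simp [hab, h] <;> push_cast <;> ring
  · simp [hab]

lemma aux_posdef_lb {d : ℕ} (hd : 1 ≤ d) (g : Fin d → Fin d → ℝ)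
    (hpos : ∀ x : Fin d → ℝ, x ≠ 0 → 0 < ∑ i, ∑ k, g i k * x i * x k) :
    ∃ lam : ℝ, 0 < lam ∧
      ∀ y : Fin d → ℝ, 1 ≤ ∑ i, y i ^ 2 → lam ≤ ∑ i, ∑ k, g i k * y i * y k := by
  set Q : (Fin d → ℝ) → ℝ := fun x => ∑ i, ∑ k, g i k * x i * x k with hQ
  have hcont : Continuous Q := by
    apply continuous_finset_sum; intro i _
    apply continuous_finset_sum; intro k _
    exact (continuous_const.mul (continuous_apply i)).mul (continuous_apply k)
  set S : Set (Fin d → ℝ) := {x | ∑ i, x i ^ 2 = 1} with hS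
  have hScont : Continuous fun x : Fin d → ℝ => ∑ i, x i ^ 2 := by
    apply continuous_finset_sum; intro i _; exact (continuous_apply i).pow 2
  have hclosed : IsClosed S := isClosed_eq hScont continuous_const
  have hbdd : Bornology.IsBounded S := by
    apply (Metric.isBounded_iff_subset_closedBall 0).2
    refine ⟨1, fun x hx => ?_⟩
    simp only [Metric.mem_closedBall, dist_zero_right]
    rw [pi_norm_le_iff_of_nonneg (by norm_num)]
    intro i
    have h1 : x i ^ 2 ≤ 1 := by
      rw [← hx]
      exact Finset.single_le_sum (fun k _ => sq_nonneg (x k)) (Finset.mem_univ i)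
    rw [Real.norm_eq_abs]
    exact (sq_le_one_iff_abs_le_one (x i)).1 h1
  have hcompact : IsCompact S := Metric.isCompact_of_isClosed_isBounded hclosed hbdd
  have hne : S.Nonempty := by
    refine ⟨fun a => if a = ⟨0, hd⟩ then 1 else 0, ?_⟩
    have : ∀ i : Fin d, ((if i = (⟨0, hd⟩ : Fin d) then (1:ℝ) else 0)) ^ 2
        = if i = (⟨0, hd⟩ : Fin d) then (1:ℝ) else 0 := by
      intro i; split <;> norm_num
    simp only [hS, Set.mem_setOf_eq, this, Finset.sum_ite_eq' Finset.univ, Finset.mem_univ, if_true]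
  obtain ⟨x0, hx0S, hmin⟩ := hcompact.exists_isMinOn hne hcont.continuousOn
  have hx0ne : x0 ≠ 0 := by
    intro h
    have := hx0S
    simp only [hS, Set.mem_setOf_eq, h] at this
    simp at this
  refine ⟨Q x0, hpos x0 hx0ne, ?_⟩
  intro y hy
  have hs2 : (0:ℝ) < ∑ i, y i ^ 2 := lt_of_lt_of_le one_pos hy
  set s : ℝ := Real.sqrt (∑ i, y i ^ 2) with hsdef
  have hspos : 0 < s := Real.sqrt_pos.2 hs2
  have hssq : s ^ 2 = ∑ i, y i ^ 2 := Real.sq_sqrt hs2.le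
  have hxS : (s⁻¹ • y) ∈ S := by
    simp only [hS, Set.mem_setOf_eq, Pi.smul_apply, smul_eq_mul, mul_pow]
    rw [← Finset.mul_sum, ← hssq]
    field_simp
  have hQscale : Q y = s ^ 2 * Q (s⁻¹ • y) := by
    simp only [hQ, Pi.smul_apply, smul_eq_mul, Finset.mul_sum]
    refine Finset.sum_congr rfl fun i _ => Finset.sum_congr rfl fun k _ => ?_
    field_simp
  have h1 : Q x0 ≤ Q (s⁻¹ • y) := hmin hxS
  have h2 : Q x0 ≤ s ^ 2 * Q (s⁻¹ • y) := by
    calc Q x0 ≤ Q (s⁻¹ • y) := h1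
    _ ≤ s ^ 2 * Q (s⁻¹ • y) := by
        nlinarith [hpos x0 hx0ne, hy, hssq, h1]
  show Q x0 ≤ Q y
  rw [hQscale]; exact h2

lemma aux_det_tri {K : ℕ} (c s u : Fin K → ℝ) :
    (Matrix.of fun m i : Fin K => c m * (s i * u i ^ (m : ℕ))).det
      = (∏ m, c m) * ((∏ i, s i) * ∏ i, ∏ k ∈ Finset.Ioi i, (u k - u i)) := by
  have h1 : (Matrix.of fun m i : Fin K => c m * (s i * u i ^ (m : ℕ)))
      = Matrix.of fun m i : Fin K => c m * (Matrix.of fun m' i' : Fin K => s i' * u i' ^ (m' : ℕ)) m i := rfl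
  rw [h1, Matrix.det_mul_column]
  congr 1
  have h2 : (Matrix.of fun m i : Fin K => s i * u i ^ (m : ℕ))
      = Matrix.of fun m i : Fin K => s i * (Matrix.vandermonde u).transpose m i := rfl
  rw [h2, Matrix.det_mul_row, Matrix.det_transpose, Matrix.det_vandermonde]

set_option maxHeartbeats 2000000 in
/-- Lemma `determinante idrodinamico`, QHD.
For an admissible metric `ḡ` and `ζ ∈ (ζ₁,ζ₂)`, the Vandermonde-type determinant of the
matrix `(∂_ζ^n Ω_{j_i}(ζ))_{n,i}` built on `K ≤ N` nonzero sites `|j_i| ≤ N` with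
strictly increasing `|j_i|_ḡ` is bounded below by `C/N^{ηK²}`, with `η > 0` depending
only on `d`. -/
theorem stmt_17 (d : ℕ) (hd : 1 ≤ d) :
    ∃ η : ℝ, 0 < η ∧
      ∀ gbar : Fin d → Fin d → ℝ, (∀ i k, gbar i k = gbar k i) →
        (∀ x : Fin d → ℝ, x ≠ 0 → 0 < ∑ i, ∑ k, gbar i k * x i * x k) →
      ∀ γ : ℝ, 0 < γ → Diophantine d gbar γ →
      ∀ ζ₁ ζ₂ : ℝ, 0 < ζ₁ → ζ₁ < ζ₂ →
      ∀ K : ℕ, ∃ C : ℝ, 0 < C ∧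
        ∀ N : ℕ, K ≤ N →
        ∀ ζ : ℝ, ζ₁ < ζ → ζ < ζ₂ →
        ∀ j : Fin K → Zd d, (∀ i, j i ≠ 0) → (∀ i, enorm (j i) ≤ (N : ℝ)) →
          StrictMono (fun i => qform d gbar (j i)) →
          C / (N : ℝ) ^ (η * (K : ℝ) ^ 2) ≤
            |(Matrix.of fun (m i : Fin K) =>
              iteratedDeriv m (fun z => qhdFreq d gbar (j i) z) ζ).det| := by
  classical
  set τ : ℕ := tauStar d with hτ
  refine ⟨2 * (τ:ℝ) + 4, by positivity, ?_⟩
  intro gbar hsym hpos γ hγ hdio ζ₁ ζ₂ hζ₁ hζ12 K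
  rcases Nat.eq_zero_or_pos K with hK0 | hK1
  · subst hK0
    refine ⟨1, one_pos, ?_⟩
    intro N hN ζ hζa hζb j hj hjN hmono
    have hdet : (Matrix.of fun (m i : Fin 0) =>
        iteratedDeriv m (fun z => qhdFreq d gbar (j i) z) ζ).det = 1 := Matrix.det_fin_zero
    rw [hdet]
    norm_num
  -- main case : 1 ≤ K
  obtain ⟨lam, hlam, hlamle⟩ := aux_posdef_lb hd gbar hpos
  set Λ : ℝ := ∑ a, ∑ b, |gbar a b| with hΛ
  have hΛ0 : 0 ≤ Λ := Finset.sum_nonneg fun a _ => Finset.sum_nonneg fun b _ => abs_nonneg _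
  have hζ₂ : 0 < ζ₂ := lt_trans hζ₁ hζ12
  have hΛζ : 0 < Λ + ζ₂ := by linarith
  have hd0 : (0:ℝ) < (d:ℝ) := by exact_mod_cast Nat.lt_of_lt_of_le Nat.zero_lt_one hd
  have h4d : (0:ℝ) < 4 * (d:ℝ)^2 := by positivity
  set B : ℝ := γ / ((4 * (d:ℝ)^2) ^ τ * (Λ + ζ₂)^2) with hB
  have hBpos : 0 < B := div_pos hγ (mul_pos (pow_pos h4d τ) (pow_pos hΛζ 2))
  set P : ℝ := ∏ m : Fin K, |∏ r ∈ Finset.range (m:ℕ), ((1:ℝ)/2 - r)| with hP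
  have hPpos : 0 < P := by
    apply Finset.prod_pos; intro m _
    rw [abs_pos]
    apply Finset.prod_ne_zero_iff.2
    intro r _
    rcases Nat.eq_zero_or_pos r with h | h
    · subst h; norm_num
    · have : (1:ℝ) ≤ (r:ℝ) := by exact_mod_cast h
      intro hc; rw [sub_eq_zero] at hc; rw [← hc] at this; norm_num at this
  set p : ℕ := ∑ i : Fin K, (Finset.Ioi i).card with hp
  refine ⟨P * lam ^ K * B ^ p, by positivity, ?_⟩
  intro N hKN ζ hζa hζb j hj hjN hmono
  have hN1 : (1:ℝ) ≤ (N:ℝ) := by exact_mod_cast le_trans hK1 hKN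
  have hN0 : (0:ℝ) < (N:ℝ) := lt_of_lt_of_le one_pos hN1
  have hζ0 : 0 < ζ := lt_trans hζ₁ hζa
  set x : Fin K → ℝ := fun i => qform d gbar (j i) with hx
  -- coordinate bounds
  have hcoord : ∀ i a, |(j i a : ℝ)| ≤ (N:ℝ) := by
    intro i a
    have h1 : ((j i a:ℝ))^2 ≤ ∑ b, ((j i b:ℝ))^2 :=
      Finset.single_le_sum (f := fun b => ((j i b:ℝ))^2) (fun b _ => sq_nonneg _) (Finset.mem_univ a)
    have h2 := hjN i
    rw [enorm] at h2
    calc |(j i a:ℝ)| = Real.sqrt (((j i a:ℝ))^2) := (Real.sqrt_sq_eq_abs _).symm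
    _ ≤ Real.sqrt (∑ b, ((j i b:ℝ))^2) := Real.sqrt_le_sqrt h1
    _ ≤ N := h2
  -- lower bound on x
  have hxlam : ∀ i, lam ≤ x i := by
    intro i
    have hex : ∃ a, j i a ≠ 0 := by
      by_contra h
      push_neg at h
      exact hj i (funext fun a => h a)
    obtain ⟨a, ha⟩ := hex
    have h1 : (1:ℝ) ≤ ((j i a : ℝ))^2 := by
      have h0 : 1 ≤ |j i a| := Int.one_le_abs ha
      have h2 : (1:ℝ) ≤ |(j i a : ℝ)| := by exact_mod_cast h0
      nlinarith [abs_nonneg ((j i a : ℝ)), sq_abs ((j i a : ℝ))]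
    have hsum : (1:ℝ) ≤ ∑ b, ((j i b:ℝ))^2 :=
      le_trans h1 (Finset.single_le_sum (f := fun b => ((j i b:ℝ))^2)
        (fun b _ => sq_nonneg _) (Finset.mem_univ a))
    exact hlamle (fun b => ((j i b : ℝ))) hsum
  have hxpos : ∀ i, 0 < x i := fun i => lt_of_lt_of_le hlam (hxlam i)
  -- upper bound on x
  have hxup : ∀ i, x i ≤ Λ * (N:ℝ)^2 := by
    intro i
    have hterm : ∀ a b : Fin d, gbar a b * (j i a:ℝ) * (j i b:ℝ) ≤ |gbar a b| * (N:ℝ) * (N:ℝ) := by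
      intro a b
      have h0 := abs_nonneg (gbar a b)
      have h1 := hcoord i a
      have h2 := hcoord i b
      have h3 := abs_nonneg ((j i a:ℝ))
      have h4 := abs_nonneg ((j i b:ℝ))
      calc gbar a b * (j i a:ℝ) * (j i b:ℝ) ≤ |gbar a b * (j i a:ℝ) * (j i b:ℝ)| := le_abs_self _
      _ = |gbar a b| * |(j i a:ℝ)| * |(j i b:ℝ)| := by rw [abs_mul, abs_mul]
      _ ≤ |gbar a b| * (N:ℝ) * (N:ℝ) := by
          have e1 : |gbar a b| * |(j i a:ℝ)| ≤ |gbar a b| * (N:ℝ) :=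
            mul_le_mul_of_nonneg_left h1 h0
          exact mul_le_mul e1 h2 h4 (mul_nonneg h0 hN0.le)
    calc x i = ∑ a, ∑ b, gbar a b * (j i a:ℝ) * (j i b:ℝ) := rfl
    _ ≤ ∑ a, ∑ b, |gbar a b| * (N:ℝ) * (N:ℝ) :=
      Finset.sum_le_sum (fun a _ => Finset.sum_le_sum (fun b _ => hterm a b))
    _ = Λ * (N:ℝ)^2 := by
        rw [hΛ, Finset.sum_mul]
        refine Finset.sum_congr rfl fun a _ => ?_
        rw [Finset.sum_mul]
        refine Finset.sum_congr rfl fun b _ => ?_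
        ring
  -- diophantine gap
  have hgap : ∀ i k : Fin K, i < k → γ / ((4*(d:ℝ)^2*(N:ℝ)^2) ^ τ) ≤ x k - x i := by
    intro i k hik
    set ℓ : Fin d → Fin d → ℤ :=
      fun a b => (if a = b then 1 else 2) * (j k a * j k b - j i a * j i b) with hℓ
    have hdiff : x k - x i = ∑ a, ∑ b, if a ≤ b then gbar a b * (ℓ a b : ℝ) else 0 := by
      show qform d gbar (j k) - qform d gbar (j i) = _
      rw [aux_qform_repr gbar hsym (j k), aux_qform_repr gbar hsym (j i), ← Finset.sum_sub_distrib]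
      refine Finset.sum_congr rfl fun a _ => ?_
      rw [← Finset.sum_sub_distrib]
      refine Finset.sum_congr rfl fun b _ => ?_
      by_cases hab : a ≤ b
      · simp only [hab, if_true, hℓ]
        push_cast
        split <;> ring
      · simp [hab]
    have hxik : x i < x k := hmono hik
    have hne : ∃ a b, a ≤ b ∧ ℓ a b ≠ 0 := by
      by_contra h
      push_neg at h
      have hz : ∑ a, ∑ b, (if a ≤ b then gbar a b * (ℓ a b : ℝ) else 0) = 0 := by
        refine Finset.sum_eq_zero fun a _ => Finset.sum_eq_zero fun b _ => ?_
        by_cases hab : a ≤ b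
        · simp [hab, h a b hab]
        · simp [hab]
      rw [hz] at hdiff; linarith
    have hdio2 := hdio ℓ hne
    have hS1 : (1:ℝ) ≤ ∑ a, ∑ b, if a ≤ b then (|ℓ a b| : ℝ) else 0 := by
      obtain ⟨a, b, hab, hab0⟩ := hne
      have h1 : (1:ℝ) ≤ (|ℓ a b| : ℝ) := by exact_mod_cast Int.one_le_abs hab0
      calc (1:ℝ) ≤ (|ℓ a b| : ℝ) := h1
      _ = (if a ≤ b then (|ℓ a b| : ℝ) else 0) := by rw [if_pos hab]
      _ ≤ ∑ b', (if a ≤ b' then (|ℓ a b'| : ℝ) else 0) :=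
          Finset.single_le_sum (f := fun b' => if a ≤ b' then (|ℓ a b'| : ℝ) else 0)
            (fun b' _ => by positivity) (Finset.mem_univ b)
      _ ≤ _ :=
          Finset.single_le_sum (f := fun a' => ∑ b', (if a' ≤ b' then (|ℓ a' b'| : ℝ) else 0))
            (fun a' _ => Finset.sum_nonneg fun b' _ => by positivity) (Finset.mem_univ a)
    have hSub : (∑ a, ∑ b, if a ≤ b then (|ℓ a b| : ℝ) else 0) ≤ 4*(d:ℝ)^2*(N:ℝ)^2 := by
      have hterm : ∀ a b : Fin d, (if a ≤ b then (|ℓ a b| : ℝ) else 0) ≤ 4*(N:ℝ)^2 := by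
        intro a b
        have h40 : (0:ℝ) ≤ 4*(N:ℝ)^2 := by positivity
        by_cases hab : a ≤ b
        · rw [if_pos hab]
          have hcast : (|ℓ a b| : ℝ) = |(ℓ a b : ℝ)| := by push_cast; rfl
          rw [hcast, hℓ]
          push_cast
          have hka := hcoord k a
          have hkb := hcoord k b
          have hia := hcoord i a
          have hib := hcoord i b
          have h1 : |(if a = b then (1:ℝ) else 2)| ≤ 2 := by split <;> norm_num
          have h2 : |(j k a:ℝ)*(j k b:ℝ) - (j i a:ℝ)*(j i b:ℝ)|
              ≤ |(j k a:ℝ)| * |(j k b:ℝ)| + |(j i a:ℝ)| * |(j i b:ℝ)| := by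
            calc |(j k a:ℝ)*(j k b:ℝ) - (j i a:ℝ)*(j i b:ℝ)|
                ≤ |(j k a:ℝ)*(j k b:ℝ)| + |(j i a:ℝ)*(j i b:ℝ)| := abs_sub _ _
            _ = |(j k a:ℝ)| * |(j k b:ℝ)| + |(j i a:ℝ)| * |(j i b:ℝ)| := by rw [abs_mul, abs_mul]
          have h3 := abs_nonneg ((j k a:ℝ)*(j k b:ℝ) - (j i a:ℝ)*(j i b:ℝ))
          have h5 := abs_nonneg ((j k a:ℝ))
          have h6 := abs_nonneg ((j k b:ℝ))
          have h7 := abs_nonneg ((j i a:ℝ))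
          have h8 := abs_nonneg ((j i b:ℝ))
          calc |(if a = b then (1:ℝ) else 2) * ((j k a:ℝ)*(j k b:ℝ) - (j i a:ℝ)*(j i b:ℝ))|
              = |(if a = b then (1:ℝ) else 2)| * |(j k a:ℝ)*(j k b:ℝ) - (j i a:ℝ)*(j i b:ℝ)| :=
                abs_mul _ _
          _ ≤ 2 * ((N:ℝ)*(N:ℝ) + (N:ℝ)*(N:ℝ)) := by
                have hp1 : |(j k a:ℝ)| * |(j k b:ℝ)| ≤ (N:ℝ)*(N:ℝ) :=
                  mul_le_mul hka hkb h6 hN0.le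
                have hp2 : |(j i a:ℝ)| * |(j i b:ℝ)| ≤ (N:ℝ)*(N:ℝ) :=
                  mul_le_mul hia hib h8 hN0.le
                have hd2 : |(j k a:ℝ)*(j k b:ℝ) - (j i a:ℝ)*(j i b:ℝ)| ≤ (N:ℝ)*(N:ℝ) + (N:ℝ)*(N:ℝ) := by
                  linarith
                exact mul_le_mul h1 hd2 h3 (by norm_num)
          _ = 4*(N:ℝ)^2 := by ring
        · rw [if_neg hab]; exact h40
      calc (∑ a, ∑ b, if a ≤ b then (|ℓ a b| : ℝ) else 0)
          ≤ ∑ _a : Fin d, ∑ _b : Fin d, 4*(N:ℝ)^2 :=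
            Finset.sum_le_sum (fun a _ => Finset.sum_le_sum (fun b _ => hterm a b))
      _ = 4*(d:ℝ)^2*(N:ℝ)^2 := by
          simp [Finset.sum_const, Finset.card_univ, nsmul_eq_mul]
          ring
    have hSpos : (0:ℝ) < ∑ a, ∑ b, if a ≤ b then (|ℓ a b| : ℝ) else 0 :=
      lt_of_lt_of_le one_pos hS1
    have habs : |∑ a, ∑ b, if a ≤ b then gbar a b * (ℓ a b:ℝ) else 0| = x k - x i := by
      rw [← hdiff]; exact abs_of_pos (by linarith)
    have hstep : γ / ((4*(d:ℝ)^2*(N:ℝ)^2) ^ τ)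
        ≤ γ / (∑ a, ∑ b, if a ≤ b then (|ℓ a b| : ℝ) else 0) ^ τ := by
      apply div_le_div_of_nonneg_left hγ.le (pow_pos hSpos τ)
      exact pow_le_pow_left₀ hSpos.le hSub τ
    calc γ / ((4*(d:ℝ)^2*(N:ℝ)^2) ^ τ)
        ≤ γ / (∑ a, ∑ b, if a ≤ b then (|ℓ a b| : ℝ) else 0) ^ τ := hstep
    _ ≤ |∑ a, ∑ b, if a ≤ b then gbar a b * (ℓ a b:ℝ) else 0| := hdio2
    _ = x k - x i := habs
  -- pair lower bound
  set u : Fin K → ℝ := fun i => (x i + ζ)⁻¹ with hu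
  have hxζ : ∀ i, 0 < x i + ζ := fun i => by have := hxlam i; linarith
  have hxζup : ∀ i, x i + ζ ≤ (Λ + ζ₂) * (N:ℝ)^2 := by
    intro i
    have h1 := hxup i
    have hN2 : (1:ℝ) ≤ (N:ℝ)^2 := by
      calc (1:ℝ) = 1*1 := by ring
      _ ≤ (N:ℝ)*(N:ℝ) := mul_le_mul hN1 hN1 one_pos.le hN0.le
      _ = (N:ℝ)^2 := by ring
    have h2 : ζ ≤ ζ₂ * (N:ℝ)^2 := by
      calc ζ ≤ ζ₂ := hζb.le
      _ = ζ₂ * 1 := by ring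
      _ ≤ ζ₂ * (N:ℝ)^2 := mul_le_mul_of_nonneg_left hN2 hζ₂.le
    calc x i + ζ ≤ Λ * (N:ℝ)^2 + ζ₂ * (N:ℝ)^2 := by linarith
    _ = (Λ + ζ₂) * (N:ℝ)^2 := by ring
  have hpair : ∀ i k : Fin K, i < k → B / (N:ℝ)^(2*τ+4) ≤ u i - u k := by
    intro i k hik
    have h1 := hgap i k hik
    have hxik : x i < x k := hmono hik
    have heq : u i - u k = (x k - x i) / ((x i + ζ) * (x k + ζ)) := by
      have hi0 : (x i + ζ) ≠ 0 := (hxζ i).ne'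
      have hk0 : (x k + ζ) ≠ 0 := (hxζ k).ne'
      show (x i + ζ)⁻¹ - (x k + ζ)⁻¹ = (x k - x i) / ((x i + ζ) * (x k + ζ))
      field_simp
      try ring
    rw [heq]
    have hDpos : 0 < (x i + ζ) * (x k + ζ) := mul_pos (hxζ i) (hxζ k)
    have hDub : (x i + ζ) * (x k + ζ) ≤ ((Λ+ζ₂)*(N:ℝ)^2) * ((Λ+ζ₂)*(N:ℝ)^2) :=
      mul_le_mul (hxζup i) (hxζup k) (hxζ k).le (mul_nonneg hΛζ.le (sq_nonneg _))
    have key : B / (N:ℝ)^(2*τ+4)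
        = (γ / (4*(d:ℝ)^2*(N:ℝ)^2)^τ) / (((Λ+ζ₂)*(N:ℝ)^2) * ((Λ+ζ₂)*(N:ℝ)^2)) := by
      rw [hB, div_div, div_div]
      congr 1
      rw [mul_pow, ← pow_mul, pow_add]
      ring
    rw [key]
    exact div_le_div₀ (by linarith) h1 hDpos hDub
  -- matrix identity
  set c : Fin K → ℝ := fun m => ∏ r ∈ Finset.range (m:ℕ), ((1:ℝ)/2 - r) with hc
  set s : Fin K → ℝ := fun i => Real.sqrt (x i) * (x i + ζ) ^ ((1:ℝ)/2) with hs
  have hMeq : (Matrix.of fun (m i : Fin K) => iteratedDeriv m (fun z => qhdFreq d gbar (j i) z) ζ)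
      = Matrix.of fun m i : Fin K => c m * (s i * u i ^ (m:ℕ)) := by
    ext m i
    simp only [Matrix.of_apply]
    have h1 : (fun z => qhdFreq d gbar (j i) z) = fun z => Real.sqrt (x i) * Real.sqrt (x i + z) := rfl
    rw [h1, aux_iteratedDeriv_sqrt_mul (x i) (m:ℕ) ζ (hxζ i)]
    have h2 : (x i + ζ) ^ ((1:ℝ)/2 - ((m:ℕ):ℝ))
        = (x i + ζ)^((1:ℝ)/2) * ((x i + ζ)⁻¹) ^ (m:ℕ) := by
      rw [Real.rpow_sub (hxζ i), Real.rpow_natCast, div_eq_mul_inv, inv_pow]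
    rw [h2]
    simp only [hc, hs, hu]
    ring
  rw [hMeq, aux_det_tri c s u, abs_mul, abs_mul]
  simp only [Finset.abs_prod]
  -- lower bounds on the three factors
  have hsnn : ∀ i : Fin K, 0 ≤ s i := by
    intro i
    simp only [hs]
    exact mul_nonneg (Real.sqrt_nonneg _) (Real.rpow_nonneg (hxζ i).le _)
  have hprod_s : lam ^ K ≤ ∏ i, |s i| := by
    have hsge : ∀ i : Fin K, lam ≤ |s i| := by
      intro i
      have hge : lam ≤ s i := by
        have h1 : Real.sqrt lam ≤ Real.sqrt (x i) := Real.sqrt_le_sqrt (hxlam i)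
        have h2 : Real.sqrt lam ≤ (x i + ζ)^((1:ℝ)/2) := by
          rw [← Real.sqrt_eq_rpow]
          exact Real.sqrt_le_sqrt (by have := hxlam i; linarith)
        calc lam = Real.sqrt lam * Real.sqrt lam := (Real.mul_self_sqrt hlam.le).symm
        _ ≤ Real.sqrt (x i) * (x i + ζ)^((1:ℝ)/2) :=
            mul_le_mul h1 h2 (Real.sqrt_nonneg _) (Real.sqrt_nonneg _)
        _ = s i := by simp only [hs]
      exact le_trans hge (le_abs_self _)
    have := Finset.prod_le_prod (s := Finset.univ) (f := fun _ : Fin K => lam)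
      (g := fun i => |s i|) (fun _ _ => hlam.le) (fun i _ => hsge i)
    simpa [Finset.prod_const, Finset.card_univ] using this
  have hBN : (0:ℝ) ≤ B / (N:ℝ)^(2*τ+4) := by positivity
  have hprod_u : (B / (N:ℝ)^(2*τ+4)) ^ p ≤ ∏ i, ∏ k ∈ Finset.Ioi i, |u k - u i| := by
    rw [hp, ← Finset.prod_pow_eq_pow_sum]
    apply Finset.prod_le_prod (fun i _ => by positivity)
    intro i _
    rw [← Finset.prod_const]
    apply Finset.prod_le_prod (fun k _ => hBN)
    intro k hk
    have hik : i < k := Finset.mem_Ioi.1 hk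
    calc B/(N:ℝ)^(2*τ+4) ≤ u i - u k := hpair i k hik
    _ ≤ |u k - u i| := by rw [abs_sub_comm]; exact le_abs_self _
  have hPeq : (∏ m, |c m|) = P := rfl
  have hfinal : P * lam^K * B^p / (N:ℝ)^((2*τ+4)*p)
      ≤ (∏ m, |c m|) * ((∏ i, |s i|) * ∏ i, ∏ k ∈ Finset.Ioi i, |u k - u i|) := by
    have h1 : P * lam^K * B^p / (N:ℝ)^((2*τ+4)*p)
        = P * (lam^K * (B/(N:ℝ)^(2*τ+4))^p) := by
      rw [pow_mul, div_pow]
      ring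
    rw [h1, hPeq]
    apply mul_le_mul_of_nonneg_left ?_ hPpos.le
    exact mul_le_mul hprod_s hprod_u (by positivity)
      (Finset.prod_nonneg fun i _ => abs_nonneg _)
  have hexp : P * lam^K * B^p / (N:ℝ) ^ ((2*(τ:ℝ)+4) * (K:ℝ)^2)
      ≤ P * lam^K * B^p / (N:ℝ)^((2*τ+4)*p) := by
    have hp2 : p ≤ K*K := by
      rw [hp]
      have h1 : (∑ i : Fin K, (Finset.Ioi i).card) ≤ ∑ _i : Fin K, K :=
        Finset.sum_le_sum (fun i _ => le_trans (Finset.card_le_univ _) (by simp))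
      have h2 : (∑ _i : Fin K, K) = K*K := by
        simp [Finset.sum_const, Finset.card_univ, mul_comm]
      rw [h2] at h1
      exact h1
    have h2 : ((N:ℝ))^(((2*τ+4)*p : ℕ)) = (N:ℝ) ^ ((((2*τ+4)*p : ℕ)):ℝ) :=
      (Real.rpow_natCast _ _).symm
    rw [h2]
    apply div_le_div_of_nonneg_left (by positivity) (Real.rpow_pos_of_pos hN0 _)
    apply Real.rpow_le_rpow_of_exponent_le hN1
    push_cast
    have hpc : (p:ℝ) ≤ (K:ℝ)*(K:ℝ) := by exact_mod_cast hp2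
    have hτ0 : (0:ℝ) ≤ (τ:ℝ) := Nat.cast_nonneg τ
    nlinarith
  exact le_trans hexp hfinal

end AG
end
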